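/- arXiv:1211.1716 — 4 statements merged into one kernel-verified Lean document; each statement's English description precedes it below -/
import Mathlib

section
/- In the ICA model, for every unit vector u ∈ ℝ^n, the kurtosis of the projection of the observed variable is unaffected by the Gaussian noise: κ4(u · X) = κ4(u · (AS)) = κ4((Aᵀu) · S) = Σ_{i=1}^n (Aᵀu)_i^4 κ4(S_i). -/
open MeasureTheory ProbabilityTheory Matrix

/-- Fourth cross-cumulant of a zero-mean random vector. -/
noncomputable def cum4 {Ω : Type*} [MeasurableSpace Ω] (μ : Measure Ω) {n : ℕ}
    (W : Ω → Fin n → ℝ) (i j k l : Fin n) : ℝ :=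
  (∫ ω, W ω i * W ω j * W ω k * W ω l ∂μ)
    - (∫ ω, W ω i * W ω j ∂μ) * (∫ ω, W ω k * W ω l ∂μ)
    - (∫ ω, W ω i * W ω k ∂μ) * (∫ ω, W ω j * W ω l ∂μ)
    - (∫ ω, W ω i * W ω l ∂μ) * (∫ ω, W ω j * W ω k ∂μ)

/-- Action of a fourth-order tensor on a matrix: `(Q ∘ M)_{ij} = ∑_{k,l} Q_{ijkl} M_{lk}`. -/
noncomputable def tensorOp {n : ℕ} (Q : Fin n → Fin n → Fin n → Fin n → ℝ)
    (M : Matrix (Fin n) (Fin n) ℝ) : Matrix (Fin n) (Fin n) ℝ :=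
  fun i j => ∑ k, ∑ l, Q i j k l * M l k

/-- Fourth cumulant (kurtosis) of a zero-mean real random variable. -/
noncomputable def kappa4 {Ω : Type*} [MeasurableSpace Ω] (μ : Measure Ω) (X : Ω → ℝ) : ℝ :=
  (∫ ω, (X ω) ^ 4 ∂μ) - 3 * (∫ ω, (X ω) ^ 2 ∂μ) ^ 2

/-- A zero-mean Gaussian random vector: every linear functional of it is a
centered Gaussian random variable. -/
def IsCenteredGaussianVector {Ω : Type*} [MeasurableSpace Ω] (μ : Measure Ω) {n : ℕ}
    (η : Ω → Fin n → ℝ) : Prop :=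
  ∀ u : Fin n → ℝ, ∃ v : NNReal,
    Measure.map (fun ω => ∑ i, u i * η ω i) μ = gaussianReal 0 v

/-- The spectral (ℓ² operator) norm of a matrix. -/
noncomputable def spec {n : ℕ} (M : Matrix (Fin n) (Fin n) ℝ) : ℝ :=
  ‖LinearMap.toContinuousLinearMap (Matrix.toEuclideanLin M)‖

/-- The Frobenius norm of a matrix. -/
noncomputable def frob {n : ℕ} (M : Matrix (Fin n) (Fin n) ℝ) : ℝ :=
  Real.sqrt (∑ i, ∑ j, (M i j) ^ 2)

/-- Euclidean norm of the q-th column of a matrix. -/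
noncomputable def colNorm {n : ℕ} (A : Matrix (Fin n) (Fin n) ℝ) (q : Fin n) : ℝ :=
  Real.sqrt (∑ i, (A i q) ^ 2)

/-- weight function of the fourth k-statistic: depends only on the number of
distinct indices. -/
noncomputable def kphi (N : ℕ) (r s t u : Fin N) : ℝ :=
  match ({r, s, t, u} : Finset (Fin N)).card with
  | 1 => 1
  | 2 => -1 / ((N : ℝ) - 1)
  | 3 => 2 / (((N : ℝ) - 1) * ((N : ℝ) - 2))
  | _ => -6 / (((N : ℝ) - 1) * ((N : ℝ) - 2) * ((N : ℝ) - 3))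

/-- The fourth k-statistic of four sample sequences of length `N`. -/
noncomputable def kstat {N : ℕ} (y₁ y₂ y₃ y₄ : Fin N → ℝ) : ℝ :=
  (1 / (N : ℝ)) * ∑ r, ∑ s, ∑ t, ∑ u, kphi N r s t u * y₁ r * y₂ s * y₃ t * y₄ u

section Aux
open Real Set Filter
open scoped NNReal ENNReal

lemma myint_pow_gauss {b : ℝ} (hb : 0 < b) (k : ℕ) :
    Integrable (fun x : ℝ => x ^ k * Real.exp (-b * x ^ 2)) := by
  have := integrable_rpow_mul_exp_neg_mul_sq hb (s := (k : ℝ)) (by exact lt_of_lt_of_le (by norm_num) (Nat.cast_nonneg k))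
  simpa [Real.rpow_natCast] using this

lemma mytendsto_pow_gauss {b : ℝ} (hb : 0 < b) (k : ℕ) :
    Tendsto (fun x : ℝ => x ^ k * Real.exp (-b * x ^ 2)) atTop (nhds 0) := by
  have hexp : Tendsto (fun x : ℝ => Real.exp (-(1/2) * x)) atTop (nhds 0) := by
    apply Real.tendsto_exp_atBot.comp
    exact (tendsto_const_mul_atBot_of_neg (by norm_num)).mpr tendsto_id
  have h := (rpow_mul_exp_neg_mul_sq_isLittleO_exp_neg hb (k : ℝ)).isBigO.trans_tendsto hexp
  refine h.congr' ?_
  filter_upwards [eventually_ge_atTop (0:ℝ)] with x hx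
  rw [Real.rpow_natCast]

lemma mygauss_rec {b : ℝ} (hb : 0 < b) (k : ℕ) :
    2 * b * ∫ x in Ioi (0:ℝ), x ^ (k+2) * Real.exp (-b * x ^ 2)
      = (k + 1 : ℝ) * ∫ x in Ioi (0:ℝ), x ^ k * Real.exp (-b * x ^ 2) := by
  set F : ℝ → ℝ := fun x => x ^ (k+1) * Real.exp (-b * x ^ 2) with hF
  have hderiv : ∀ x ∈ Ici (0:ℝ), HasDerivAt F
      ((k+1 : ℝ) * x ^ k * Real.exp (-b * x ^ 2)
        - 2 * b * (x ^ (k+2) * Real.exp (-b * x ^ 2))) x := by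
    intro x _
    have h1 : HasDerivAt (fun x : ℝ => x ^ (k+1)) ((k+1 : ℝ) * x ^ k) x := by
      simpa using hasDerivAt_pow (k+1) x
    have h2 : HasDerivAt (fun x : ℝ => Real.exp (-b * x ^ 2))
        (Real.exp (-b * x ^ 2) * (-b * (2 * x))) x := by
      have hx : HasDerivAt (fun x : ℝ => -b * x ^ 2) (-b * (2 * x)) x := by
        simpa using ((hasDerivAt_pow 2 x).const_mul (-b))
      exact (Real.hasDerivAt_exp _).comp x hx
    have := h1.mul h2
    refine this.congr_deriv ?_
    ring
  have hint : IntegrableOn (fun x : ℝ => (k+1 : ℝ) * x ^ k * Real.exp (-b * x ^ 2)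
      - 2 * b * (x ^ (k+2) * Real.exp (-b * x ^ 2))) (Ioi (0:ℝ)) := by
    apply Integrable.sub
    · have := ((myint_pow_gauss hb k).const_mul (k+1 : ℝ)).restrict (s := Ioi (0:ℝ))
      simpa [mul_assoc] using this
    · exact ((myint_pow_gauss hb (k+2)).const_mul (2*b)).restrict
  have htend : Tendsto F atTop (nhds 0) := mytendsto_pow_gauss hb (k+1)
  have h0 : F 0 = 0 := by simp [hF]
  have := MeasureTheory.integral_Ioi_of_hasDerivAt_of_tendsto' hderiv hint htend
  rw [h0, sub_zero] at this
  have heq : ∫ x in Ioi (0:ℝ), ((k+1 : ℝ) * x ^ k * Real.exp (-b * x ^ 2)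
      - 2 * b * (x ^ (k+2) * Real.exp (-b * x ^ 2)))
      = (k+1 : ℝ) * (∫ x in Ioi (0:ℝ), x ^ k * Real.exp (-b * x ^ 2))
        - 2 * b * ∫ x in Ioi (0:ℝ), x ^ (k+2) * Real.exp (-b * x ^ 2) := by
    rw [integral_sub ?h1 ?h2]
    · simp_rw [mul_assoc, integral_const_mul]
    case h1 =>
      have := ((myint_pow_gauss hb k).const_mul (k+1 : ℝ)).restrict (s := Ioi (0:ℝ))
      simpa [mul_assoc] using this
    case h2 => exact ((myint_pow_gauss hb (k+2)).const_mul (2*b)).restrict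
  rw [heq] at this
  linarith

lemma myJ_even {b : ℝ} (k : ℕ) :
    ∫ x : ℝ, x ^ (2*k) * Real.exp (-b * x ^ 2)
      = 2 * ∫ x in Ioi (0:ℝ), x ^ (2*k) * Real.exp (-b * x ^ 2) := by
  have h := integral_comp_abs (f := fun x : ℝ => x ^ (2*k) * Real.exp (-b * x ^ 2))
  rw [← h]
  refine integral_congr_ae (Filter.Eventually.of_forall fun x => ?_)
  simp [pow_mul, sq_abs]

lemma myJ_odd {b : ℝ} (k : ℕ) : ∫ x : ℝ, x ^ (2*k+1) * Real.exp (-b * x ^ 2) = 0 := by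
  have h := integral_neg_eq_self
    (f := fun x : ℝ => x ^ (2*k+1) * Real.exp (-b * x ^ 2)) (μ := volume)
  have h2 : (fun x : ℝ => (-x) ^ (2*k+1) * Real.exp (-b * (-x) ^ 2))
      = fun x : ℝ => -(x ^ (2*k+1) * Real.exp (-b * x ^ 2)) := by
    funext x
    rw [Odd.neg_pow ⟨k, by ring⟩, neg_sq]; ring
  rw [h2, integral_neg] at h
  linarith

lemma myJ2 {b : ℝ} (hb : 0 < b) :
    ∫ x : ℝ, x ^ 2 * Real.exp (-b * x ^ 2) = Real.sqrt (π / b) / (2*b) := by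
  have h := mygauss_rec hb 0
  have hI0 : ∫ x in Ioi (0:ℝ), x ^ 0 * Real.exp (-b * x^2) = Real.sqrt (π/b) / 2 := by
    have := integral_gaussian_Ioi b
    simpa using this
  rw [hI0] at h
  have he := myJ_even (b := b) 1
  norm_num at he h ⊢
  rw [he]
  field_simp at h ⊢
  linarith

lemma myJ4 {b : ℝ} (hb : 0 < b) :
    ∫ x : ℝ, x ^ 4 * Real.exp (-b * x ^ 2) = 3 * Real.sqrt (π / b) / (4*b^2) := by
  have h := mygauss_rec hb 2
  have h2 := myJ2 hb
  have he2 := myJ_even (b := b) 1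
  have he4 := myJ_even (b := b) 2
  norm_num at he2 he4 h h2 ⊢
  rw [he4]
  rw [he2] at h2
  have hb' : b ≠ 0 := ne_of_gt hb
  field_simp at h h2 ⊢
  linear_combination (4*b) * h + 3 * h2

lemma mypdf_eq (v : ℝ≥0) (hv : v ≠ 0) (x : ℝ) :
    gaussianPDFReal 0 v x
      = (Real.sqrt (2 * π * v))⁻¹ * Real.exp (-((2 * (v:ℝ))⁻¹) * x ^ 2) := by
  have hv' : (0:ℝ) < v := by positivity
  rw [gaussianPDFReal]
  congr 1
  rw [sub_zero]
  congr 1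
  field_simp

lemma mygauss_integral (v : ℝ≥0) (hv : v ≠ 0) (g : ℝ → ℝ) :
    ∫ x, g x ∂(gaussianReal 0 v) = ∫ x, gaussianPDFReal 0 v x * g x := by
  rw [gaussianReal_of_var_ne_zero 0 hv]
  have hd : (gaussianPDF 0 v)
      = fun x => (((gaussianPDFReal 0 v x).toNNReal : ℝ≥0) : ℝ≥0∞) := by
    funext x; rfl
  rw [hd, integral_withDensity_eq_integral_smul
    ((measurable_gaussianPDFReal 0 v).real_toNNReal) g]
  refine integral_congr_ae (Filter.Eventually.of_forall fun x => ?_)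
  simp [NNReal.smul_def, Real.coe_toNNReal _ (gaussianPDFReal_nonneg 0 v x)]

lemma mygauss_integrable_pow (v : ℝ≥0) (k : ℕ) :
    Integrable (fun x : ℝ => x ^ k) (gaussianReal 0 v) := by
  by_cases hv : v = 0
  · rw [hv, gaussianReal_zero_var]
    refine ⟨(measurable_id.pow_const k).aestronglyMeasurable, ?_⟩
    simp only [HasFiniteIntegral]
    rw [lintegral_dirac]
    exact ENNReal.coe_lt_top
  · rw [gaussianReal_of_var_ne_zero 0 hv]
    have hd : (gaussianPDF 0 v)
        = fun x => (((gaussianPDFReal 0 v x).toNNReal : ℝ≥0) : ℝ≥0∞) := by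
      funext x; rfl
    rw [hd, integrable_withDensity_iff_integrable_smul
      ((measurable_gaussianPDFReal 0 v).real_toNNReal)]
    have hv' : (0:ℝ) < v := by positivity
    have hb : (0:ℝ) < (2 * (v:ℝ))⁻¹ := by positivity
    refine ((myint_pow_gauss hb k).const_mul ((Real.sqrt (2 * π * v))⁻¹)).congr
      (Filter.Eventually.of_forall fun x => ?_)
    show (Real.sqrt (2 * π * v))⁻¹ * (x ^ k * Real.exp (-((2 * (v:ℝ))⁻¹) * x ^ 2))
        = (gaussianPDFReal 0 v x).toNNReal • x ^ k
    rw [NNReal.smul_def, Real.coe_toNNReal _ (gaussianPDFReal_nonneg 0 v x), mypdf_eq v hv, smul_eq_mul]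
    ring

lemma mygauss_mom_eq (v : ℝ≥0) (hv : v ≠ 0) (k : ℕ) :
    ∫ x, x ^ k ∂(gaussianReal 0 v)
      = (Real.sqrt (2 * π * v))⁻¹
        * ∫ x : ℝ, x ^ k * Real.exp (-((2*(v:ℝ))⁻¹) * x ^ 2) := by
  rw [mygauss_integral v hv, ← integral_const_mul]
  refine integral_congr_ae (Filter.Eventually.of_forall fun x => ?_)
  simp only [mypdf_eq v hv]; ring

lemma mygauss_sqrt_eq (v : ℝ≥0) (hv : v ≠ 0) :
    Real.sqrt (π / (2*(v:ℝ))⁻¹) = Real.sqrt (2 * π * v) := by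
  have hv' : (0:ℝ) < v := by positivity
  congr 1
  field_simp

lemma mygauss_mom1 (v : ℝ≥0) : ∫ x, x ∂(gaussianReal 0 v) = 0 := by
  by_cases hv : v = 0
  · rw [hv, gaussianReal_zero_var, integral_dirac]
  · have h := mygauss_mom_eq v hv 1
    simp only [pow_one] at h
    rw [h]
    have h0 : ∫ x : ℝ, x ^ 1 * Real.exp (-((2*(v:ℝ))⁻¹) * x ^ 2) = 0 :=
      myJ_odd (b := (2*(v:ℝ))⁻¹) 0
    simp only [pow_one] at h0
    rw [h0, mul_zero]

lemma mygauss_mom3 (v : ℝ≥0) : ∫ x, x ^ 3 ∂(gaussianReal 0 v) = 0 := by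
  by_cases hv : v = 0
  · rw [hv, gaussianReal_zero_var, integral_dirac]; norm_num
  · rw [mygauss_mom_eq v hv 3]
    have h0 : ∫ x : ℝ, x ^ 3 * Real.exp (-((2*(v:ℝ))⁻¹) * x ^ 2) = 0 :=
      myJ_odd (b := (2*(v:ℝ))⁻¹) 1
    rw [h0, mul_zero]

lemma mygauss_mom2 (v : ℝ≥0) : ∫ x, x ^ 2 ∂(gaussianReal 0 v) = v := by
  by_cases hv : v = 0
  · rw [hv, gaussianReal_zero_var, integral_dirac]; norm_num [hv]
  · have hv' : (0:ℝ) < v := by positivity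
    have hb : (0:ℝ) < (2 * (v:ℝ))⁻¹ := by positivity
    rw [mygauss_mom_eq v hv 2, myJ2 hb, mygauss_sqrt_eq v hv]
    have hne : Real.sqrt (2*π*(v:ℝ)) ≠ 0 := by positivity
    field_simp

lemma mygauss_mom4 (v : ℝ≥0) : ∫ x, x ^ 4 ∂(gaussianReal 0 v) = 3 * (v:ℝ)^2 := by
  by_cases hv : v = 0
  · rw [hv, gaussianReal_zero_var, integral_dirac]; norm_num [hv]
  · have hv' : (0:ℝ) < v := by positivity
    have hb : (0:ℝ) < (2 * (v:ℝ))⁻¹ := by positivity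
    rw [mygauss_mom_eq v hv 4, myJ4 hb, mygauss_sqrt_eq v hv]
    have hne : Real.sqrt (2*π*(v:ℝ)) ≠ 0 := by positivity
    field_simp
    ring

lemma myint_pow_of_memL4 {Ω : Type*} [MeasurableSpace Ω] {μ : Measure Ω} [IsProbabilityMeasure μ]
    {f : Ω → ℝ} (hf : MemLp f 4 μ) {k : ℕ} (hk : k ≤ 4) :
    Integrable (fun ω => f ω ^ k) μ := by
  rcases Nat.eq_zero_or_pos k with h0 | hpos
  · subst h0; simp only [pow_zero]; exact integrable_const (1:ℝ)
  · have hle : (k : ℝ≥0∞) ≤ 4 := by exact_mod_cast hk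
    have hfk : MemLp f k μ := hf.mono_exponent hle
    have h1 := hfk.integrable_norm_rpow (by exact_mod_cast hpos.ne') (by simp)
    refine Integrable.mono' h1
      ((hf.aestronglyMeasurable.aemeasurable.pow_const k).aestronglyMeasurable) ?_
    refine Filter.Eventually.of_forall fun ω => ?_
    rw [ENNReal.toReal_natCast, Real.rpow_natCast, norm_pow]

lemma mykappa4_const_mul {Ω : Type*} [MeasurableSpace Ω] (μ : Measure Ω) (c : ℝ) (f : Ω → ℝ) :
    kappa4 μ (fun ω => c * f ω) = c ^ 4 * kappa4 μ f := by
  simp only [kappa4, mul_pow, integral_const_mul]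
  ring

lemma mykappa4_add {Ω : Type*} [MeasurableSpace Ω] {μ : Measure Ω} [IsProbabilityMeasure μ]
    {T Z : Ω → ℝ} (hind : IndepFun T Z μ)
    (hT : ∀ k, k ≤ 4 → Integrable (fun ω => T ω ^ k) μ)
    (hZ : ∀ k, k ≤ 4 → Integrable (fun ω => Z ω ^ k) μ)
    (hT0 : ∫ ω, T ω ∂μ = 0) (hZ0 : ∫ ω, Z ω ∂μ = 0) :
    kappa4 μ (fun ω => T ω + Z ω) = kappa4 μ T + kappa4 μ Z := by
  have hpow : ∀ a b : ℕ, IndepFun (fun ω => T ω ^ a) (fun ω => Z ω ^ b) μ := fun a b =>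
    hind.comp (measurable_id.pow_const a) (measurable_id.pow_const b)
  have iTZ : ∀ a b : ℕ, a ≤ 4 → b ≤ 4 →
      Integrable (fun ω => T ω ^ a * Z ω ^ b) μ := fun a b ha hb =>
    (hpow a b).integrable_mul (hT a ha) (hZ b hb)
  have eTZ : ∀ a b : ℕ, a ≤ 4 → b ≤ 4 →
      ∫ ω, T ω ^ a * Z ω ^ b ∂μ = (∫ ω, T ω ^ a ∂μ) * ∫ ω, Z ω ^ b ∂μ := fun a b ha hb =>
    (hpow a b).integral_fun_mul_eq_mul_integral (hT a ha).aestronglyMeasurable (hZ b hb).aestronglyMeasurable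
  have hT1 : ∫ ω, T ω ^ 1 ∂μ = 0 := by simpa using hT0
  have hZ1 : ∫ ω, Z ω ^ 1 ∂μ = 0 := by simpa using hZ0
  have iA : Integrable (fun ω => T ω ^ 2 + Z ω ^ 2) μ :=
    (hT 2 (by norm_num)).add (hZ 2 (by norm_num))
  have iB : Integrable (fun ω => 2 * (T ω ^ 1 * Z ω ^ 1)) μ :=
    (iTZ 1 1 (by norm_num) (by norm_num)).const_mul 2
  have m2 : ∫ ω, (T ω + Z ω) ^ 2 ∂μ = (∫ ω, T ω ^ 2 ∂μ) + ∫ ω, Z ω ^ 2 ∂μ := by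
    have e : (fun ω => (T ω + Z ω) ^ 2)
        = fun ω => (T ω ^ 2 + Z ω ^ 2) + 2 * (T ω ^ 1 * Z ω ^ 1) := by
      funext ω; ring
    rw [e, integral_add iA iB,
      integral_add (hT 2 (by norm_num)) (hZ 2 (by norm_num)),
      integral_const_mul, eTZ 1 1 (by norm_num) (by norm_num), hT1]
    ring
  have m4 : ∫ ω, (T ω + Z ω) ^ 4 ∂μ
      = (∫ ω, T ω ^ 4 ∂μ) + (∫ ω, Z ω ^ 4 ∂μ)
        + 6 * ((∫ ω, T ω ^ 2 ∂μ) * ∫ ω, Z ω ^ 2 ∂μ) := by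
    have e : (fun ω => (T ω + Z ω) ^ 4)
        = fun ω => (T ω ^ 4 + Z ω ^ 4)
          + ((4 * (T ω ^ 3 * Z ω ^ 1) + 4 * (T ω ^ 1 * Z ω ^ 3))
            + 6 * (T ω ^ 2 * Z ω ^ 2)) := by
      funext ω; ring
    have i44 : Integrable (fun ω => T ω ^ 4 + Z ω ^ 4) μ :=
      (hT 4 le_rfl).add (hZ 4 le_rfl)
    have i31 : Integrable (fun ω => 4 * (T ω ^ 3 * Z ω ^ 1)) μ :=
      (iTZ 3 1 (by norm_num) (by norm_num)).const_mul 4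
    have i13 : Integrable (fun ω => 4 * (T ω ^ 1 * Z ω ^ 3)) μ :=
      (iTZ 1 3 (by norm_num) (by norm_num)).const_mul 4
    have i22 : Integrable (fun ω => 6 * (T ω ^ 2 * Z ω ^ 2)) μ :=
      (iTZ 2 2 (by norm_num) (by norm_num)).const_mul 6
    have iC : Integrable (fun ω => 4 * (T ω ^ 3 * Z ω ^ 1) + 4 * (T ω ^ 1 * Z ω ^ 3)) μ :=
      i31.add i13
    have iD : Integrable
        (fun ω => (4 * (T ω ^ 3 * Z ω ^ 1) + 4 * (T ω ^ 1 * Z ω ^ 3))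
          + 6 * (T ω ^ 2 * Z ω ^ 2)) μ := iC.add i22
    rw [e, integral_add i44 iD, integral_add (hT 4 le_rfl) (hZ 4 le_rfl),
      integral_add iC i22, integral_add i31 i13,
      integral_const_mul, integral_const_mul, integral_const_mul,
      eTZ 3 1 (by norm_num) (by norm_num), eTZ 1 3 (by norm_num) (by norm_num),
      eTZ 2 2 (by norm_num) (by norm_num), hT1, hZ1]
    ring
  simp only [kappa4, m2, m4]
  ring

lemma mykappa4_sum {Ω : Type*} [MeasurableSpace Ω] {μ : Measure Ω} [IsProbabilityMeasure μ]
    {n : ℕ} {S : Ω → Fin n → ℝ}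
    (hSmeas : ∀ i, Measurable fun ω => S ω i)
    (hSmean : ∀ i, ∫ ω, S ω i ∂μ = 0)
    (hSmom : ∀ i, MemLp (fun ω => S ω i) 4 μ)
    (hSind : iIndepFun (fun i ω => S ω i) μ)
    (w : Fin n → ℝ) (s : Finset (Fin n)) :
    kappa4 μ (fun ω => ∑ i ∈ s, w i * S ω i)
      = ∑ i ∈ s, w i ^ 4 * kappa4 μ (fun ω => S ω i) := by
  classical
  induction s using Finset.induction_on with
  | empty => simp [kappa4]
  | @insert a s ha ih =>
    have hgind : iIndepFun (fun i ω => w i * S ω i) μ :=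
      hSind.comp (fun i x => w i * x) (fun i => measurable_id.const_mul (w i))
    have hgmeas : ∀ i, Measurable (fun ω => w i * S ω i) :=
      fun i => (hSmeas i).const_mul (w i)
    have hsum := hgind.indepFun_finsetSum_of_notMem hgmeas ha
    have hsum_eq : (∑ j ∈ s, fun ω => w j * S ω j) = fun ω => ∑ j ∈ s, w j * S ω j := by
      funext ω; simp
    rw [hsum_eq] at hsum
    have hTmem : MemLp (fun ω => ∑ i ∈ s, w i * S ω i) 4 μ :=
      memLp_finset_sum s (fun i _ => (hSmom i).const_mul (w i))
    have hZmem : MemLp (fun ω => w a * S ω a) 4 μ := (hSmom a).const_mul (w a)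
    have hT0 : ∫ ω, ∑ i ∈ s, w i * S ω i ∂μ = 0 := by
      rw [integral_finset_sum s (fun i _ =>
        ((hSmom i).integrable (by norm_num)).const_mul (w i))]
      refine Finset.sum_eq_zero fun i _ => ?_
      rw [integral_const_mul, hSmean i, mul_zero]
    have hZ0 : ∫ ω, w a * S ω a ∂μ = 0 := by
      rw [integral_const_mul, hSmean a, mul_zero]
    have he : (fun ω => ∑ i ∈ insert a s, w i * S ω i)
        = fun ω => (∑ i ∈ s, w i * S ω i) + w a * S ω a := by
      funext ω; rw [Finset.sum_insert ha]; ring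
    rw [he, mykappa4_add hsum
      (fun k hk => myint_pow_of_memL4 hTmem hk)
      (fun k hk => myint_pow_of_memL4 hZmem hk) hT0 hZ0,
      ih, mykappa4_const_mul, Finset.sum_insert ha]
    ring

end Aux

/-- in the ICA model $X = AS + η$, for every unit vector $u$ the
kurtosis of the projection $u ⋅ X$ is unaffected by the Gaussian noise:
$κ_4(u⋅X) = κ_4(u⋅(AS)) = κ_4((Aᵀu)⋅S) = ∑_i (Aᵀu)_i^4 κ_4(S_i)$. -/
theorem kappa4_projection_noise_invariant
    {Ω : Type*} [MeasurableSpace Ω] (μ : Measure Ω) [IsProbabilityMeasure μ] {n : ℕ}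
    (A : Matrix (Fin n) (Fin n) ℝ) (hA : IsUnit A)
    (S η X : Ω → Fin n → ℝ)
    (hSmeas : ∀ i, Measurable fun ω => S ω i)
    (hSmean : ∀ i, ∫ ω, S ω i ∂μ = 0)
    (hSvar : ∀ i, ∫ ω, (S ω i) ^ 2 ∂μ = 1)
    (hSmom : ∀ i, MemLp (fun ω => S ω i) 4 μ)
    (hSind : iIndepFun (fun i ω => S ω i) μ)
    (hηmeas : ∀ i, Measurable fun ω => η ω i)
    (hηGauss : IsCenteredGaussianVector μ η)
    (hSη : IndepFun S η μ)
    (hX : ∀ ω, X ω = A.mulVec (S ω) + η ω)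
    (u : Fin n → ℝ) (hu : ∑ i, (u i) ^ 2 = 1) :
    kappa4 μ (fun ω => ∑ i, u i * X ω i)
        = kappa4 μ (fun ω => ∑ i, u i * A.mulVec (S ω) i) ∧
    kappa4 μ (fun ω => ∑ i, u i * A.mulVec (S ω) i)
        = kappa4 μ (fun ω => ∑ i, Aᵀ.mulVec u i * S ω i) ∧
    kappa4 μ (fun ω => ∑ i, Aᵀ.mulVec u i * S ω i)
        = ∑ i, (Aᵀ.mulVec u i) ^ 4 * kappa4 μ (fun ω => S ω i) := by
  classical
  have hTw : ∀ ω, ∑ i, u i * A.mulVec (S ω) i = ∑ i, Aᵀ.mulVec u i * S ω i := by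
    intro ω
    simp only [Matrix.mulVec, dotProduct, Matrix.transpose_apply, Finset.mul_sum,
      Finset.sum_mul]
    rw [Finset.sum_comm]
    exact Finset.sum_congr rfl fun j _ => Finset.sum_congr rfl fun i _ => by ring
  have hfe : (fun ω => ∑ i, u i * A.mulVec (S ω) i)
      = fun ω => ∑ i, Aᵀ.mulVec u i * S ω i := funext hTw
  have part2 : kappa4 μ (fun ω => ∑ i, u i * A.mulVec (S ω) i)
      = kappa4 μ (fun ω => ∑ i, Aᵀ.mulVec u i * S ω i) := by rw [hfe]
  have part3 : kappa4 μ (fun ω => ∑ i, Aᵀ.mulVec u i * S ω i)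
      = ∑ i, (Aᵀ.mulVec u i) ^ 4 * kappa4 μ (fun ω => S ω i) :=
    mykappa4_sum hSmeas hSmean hSmom hSind _ Finset.univ
  refine ⟨?_, part2, part3⟩
  obtain ⟨v, hv⟩ := hηGauss u
  have hZm : Measurable (fun ω => ∑ i, u i * η ω i) :=
    Finset.measurable_sum _ (fun i _ => ((hηmeas i).const_mul (u i)))
  have hZint : ∀ k : ℕ, Integrable (fun ω => (∑ i, u i * η ω i) ^ k) μ := by
    intro k
    have h := mygauss_integrable_pow v k
    rw [← hv] at h
    exact (integrable_map_measure (measurable_id.pow_const k).aestronglyMeasurable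
      hZm.aemeasurable).mp h
  have hZmom : ∀ k : ℕ, ∫ ω, (∑ i, u i * η ω i) ^ k ∂μ = ∫ x, x ^ k ∂(gaussianReal 0 v) := by
    intro k
    rw [← hv, integral_map (φ := fun ω => ∑ i, u i * η ω i) (f := fun x : ℝ => x ^ k)
      hZm.aemeasurable (measurable_id.pow_const k).aestronglyMeasurable]
  have hZ0 : ∫ ω, ∑ i, u i * η ω i ∂μ = 0 := by
    have h := hZmom 1
    simp only [pow_one] at h
    rw [h, mygauss_mom1 v]
  have hkZ : kappa4 μ (fun ω => ∑ i, u i * η ω i) = 0 := by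
    rw [kappa4, hZmom 4, hZmom 2, mygauss_mom4 v, mygauss_mom2 v]
    ring
  have hTmem : MemLp (fun ω => ∑ i, Aᵀ.mulVec u i * S ω i) 4 μ :=
    memLp_finset_sum Finset.univ (fun i _ => (hSmom i).const_mul _)
  have hT0 : ∫ ω, ∑ i, Aᵀ.mulVec u i * S ω i ∂μ = 0 := by
    rw [integral_finset_sum Finset.univ (fun i _ =>
      ((hSmom i).integrable (by norm_num)).const_mul (Aᵀ.mulVec u i))]
    refine Finset.sum_eq_zero fun i _ => ?_
    rw [integral_const_mul, hSmean i, mul_zero]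
  have hfm : Measurable (fun x : Fin n → ℝ => ∑ i, u i * A.mulVec x i) := by
    refine Finset.measurable_sum _ fun i _ => Measurable.const_mul ?_ (u i)
    simp only [Matrix.mulVec, dotProduct]
    exact Finset.measurable_sum _ (fun j _ => by fun_prop)
  have hgm : Measurable (fun x : Fin n → ℝ => ∑ i, u i * x i) :=
    Finset.measurable_sum _ (fun i _ => by fun_prop)
  have hind : IndepFun (fun ω => ∑ i, u i * A.mulVec (S ω) i)
      (fun ω => ∑ i, u i * η ω i) μ := hSη.comp hfm hgm
  rw [hfe] at hind
  have hXe : (fun ω => ∑ i, u i * X ω i)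
      = fun ω => (∑ i, Aᵀ.mulVec u i * S ω i) + ∑ i, u i * η ω i := by
    funext ω
    rw [hX ω, ← hTw ω, ← Finset.sum_add_distrib]
    exact Finset.sum_congr rfl fun i _ => by simp [mul_add]
  rw [hXe, hfe,
    mykappa4_add hind (fun k hk => myint_pow_of_memL4 hTmem hk) (fun k _ => hZint k) hT0 hZ0,
    hkZ, add_zero]
end

section
/- Let α_1, …, α_n be nonzero real numbers and define G : S^{n−1} → ℝ on the unit sphere by G(v) = Σ_{i=1}^n v_i^4 α_i. If some α_i > 0, then the set of local maxima of G restricted to the unit sphere is exactly { ±e_i : α_i > 0 }, where e_i denotes the i-th canonical basis vector; similarly, if some α_i < 0, then the set of local minima of G restricted to the unit sphere is exactly { ±e_i : α_i < 0 }. -/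
open MeasureTheory ProbabilityTheory Matrix

lemma sum_sq_eq_one' {n : ℕ} {v : EuclideanSpace ℝ (Fin n)}
    (hv : v ∈ Metric.sphere (0 : EuclideanSpace ℝ (Fin n)) 1) :
    ∑ k, (v k) ^ 2 = 1 := by
  rw [mem_sphere_zero_iff_norm, EuclideanSpace.norm_eq, Real.sqrt_eq_one] at hv
  simpa [Real.norm_eq_abs, sq_abs] using hv

lemma mem_sphere_of_sum_sq {n : ℕ} {v : EuclideanSpace ℝ (Fin n)}
    (h : ∑ k, (v k) ^ 2 = 1) :
    v ∈ Metric.sphere (0 : EuclideanSpace ℝ (Fin n)) 1 := by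
  rw [mem_sphere_zero_iff_norm, EuclideanSpace.norm_eq]
  simp [Real.norm_eq_abs, sq_abs, h]

lemma perturb {n : ℕ} {α : Fin n → ℝ} {G : EuclideanSpace ℝ (Fin n) → ℝ}
    (hG : ∀ v, G v = ∑ i, (v i) ^ 4 * α i)
    {v : EuclideanSpace ℝ (Fin n)}
    (hv : v ∈ Metric.sphere (0 : EuclideanSpace ℝ (Fin n)) 1)
    (hmax : IsLocalMaxOn G (Metric.sphere (0 : EuclideanSpace ℝ (Fin n)) 1) v)
    {i j : Fin n} (hij : i ≠ j) :
    ∃ ε > 0, ∀ s : ℝ, |s| < ε → -(v i)^2 ≤ s → s ≤ (v j)^2 →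
      2*s*((v i)^2*α i - (v j)^2*α j) + s^2*(α i + α j) ≤ 0 := by
  classical
  set σi : ℝ := if v i < 0 then -1 else 1 with hσidef
  set σj : ℝ := if v j < 0 then -1 else 1 with hσjdef
  have hσi2 : σi^2 = 1 := by rw [hσidef]; split <;> norm_num
  have hσj2 : σj^2 = 1 := by rw [hσjdef]; split <;> norm_num
  have hσiv : σi * |v i| = v i := by
    rw [hσidef]; rcases lt_or_ge (v i) 0 with h | h
    · simp [h, abs_of_neg h]
    · simp [not_lt.2 h, abs_of_nonneg h]
  have hσjv : σj * |v j| = v j := by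
    rw [hσjdef]; rcases lt_or_ge (v j) 0 with h | h
    · simp [h, abs_of_neg h]
    · simp [not_lt.2 h, abs_of_nonneg h]
  set fi : ℝ → ℝ := fun s => σi * Real.sqrt ((v i)^2 + s) - v i with hfidef
  set fj : ℝ → ℝ := fun s => σj * Real.sqrt ((v j)^2 - s) - v j with hfjdef
  set w : ℝ → EuclideanSpace ℝ (Fin n) := fun s =>
    v + fi s • EuclideanSpace.single i (1:ℝ) + fj s • EuclideanSpace.single j (1:ℝ) with hwdef
  have hfi0 : fi 0 = 0 := by simp [hfidef, Real.sqrt_sq_eq_abs, hσiv]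
  have hfj0 : fj 0 = 0 := by simp [hfjdef, Real.sqrt_sq_eq_abs, hσjv]
  have hw0 : w 0 = v := by simp [hwdef, hfi0, hfj0]
  have hfic : Continuous fi :=
    (continuous_const.mul (Real.continuous_sqrt.comp (continuous_const.add continuous_id))).sub
      continuous_const
  have hfjc : Continuous fj :=
    (continuous_const.mul (Real.continuous_sqrt.comp (continuous_const.sub continuous_id))).sub
      continuous_const
  have hcont : Continuous w :=
    (continuous_const.add (hfic.smul continuous_const)).add (hfjc.smul continuous_const)
  have hwi : ∀ s, w s i = σi * Real.sqrt ((v i)^2 + s) := by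
    intro s
    simp [hwdef, PiLp.add_apply, PiLp.smul_apply, EuclideanSpace.single_apply,
      hij, hij.symm, hfidef, smul_eq_mul]
  have hwj : ∀ s, w s j = σj * Real.sqrt ((v j)^2 - s) := by
    intro s
    simp [hwdef, PiLp.add_apply, PiLp.smul_apply, EuclideanSpace.single_apply,
      hij, hij.symm, hfjdef, smul_eq_mul]
  have hwk : ∀ s, ∀ k, k ≠ i → k ≠ j → w s k = v k := by
    intro s k hki hkj
    simp [hwdef, PiLp.add_apply, PiLp.smul_apply, EuclideanSpace.single_apply, hki, hkj]
  have hjmem : j ∈ Finset.univ.erase i := by simp [Finset.mem_erase, hij.symm]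
  have split : ∀ g : Fin n → ℝ,
      ∑ k, g k = g i + (g j + ∑ k ∈ (Finset.univ.erase i).erase j, g k) := by
    intro g
    rw [Finset.add_sum_erase _ g hjmem, Finset.add_sum_erase _ g (Finset.mem_univ i)]
  have hsq : ∀ s : ℝ, -(v i)^2 ≤ s → s ≤ (v j)^2 →
      (w s i)^2 = (v i)^2 + s ∧ (w s j)^2 = (v j)^2 - s := by
    intro s h1 h2
    constructor
    · rw [hwi s, mul_pow, hσi2, one_mul, Real.sq_sqrt (by linarith)]
    · rw [hwj s, mul_pow, hσj2, one_mul, Real.sq_sqrt (by linarith)]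
  have hmem : ∀ s : ℝ, -(v i)^2 ≤ s → s ≤ (v j)^2 →
      w s ∈ Metric.sphere (0 : EuclideanSpace ℝ (Fin n)) 1 := by
    intro s h1 h2
    apply mem_sphere_of_sum_sq
    obtain ⟨e1, e2⟩ := hsq s h1 h2
    have hv1 := sum_sq_eq_one' hv
    rw [split (fun k => (w s k)^2)] at *
    rw [split (fun k => (v k)^2)] at hv1
    have : ∑ k ∈ (Finset.univ.erase i).erase j, (w s k)^2
        = ∑ k ∈ (Finset.univ.erase i).erase j, (v k)^2 := by
      apply Finset.sum_congr rfl
      intro k hk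
      simp only [Finset.mem_erase] at hk
      rw [hwk s k hk.2.1 hk.1]
    rw [e1, e2, this]
    linarith
  have hGw : ∀ s : ℝ, -(v i)^2 ≤ s → s ≤ (v j)^2 →
      G (w s) = G v + (2*s*((v i)^2*α i - (v j)^2*α j) + s^2*(α i + α j)) := by
    intro s h1 h2
    obtain ⟨e1, e2⟩ := hsq s h1 h2
    rw [hG, hG, split (fun k => (w s k)^4 * α k), split (fun k => (v k)^4 * α k)]
    have : ∑ k ∈ (Finset.univ.erase i).erase j, (w s k)^4 * α k
        = ∑ k ∈ (Finset.univ.erase i).erase j, (v k)^4 * α k := by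
      apply Finset.sum_congr rfl
      intro k hk
      simp only [Finset.mem_erase] at hk
      rw [hwk s k hk.2.1 hk.1]
    rw [this]
    have e1' : (w s i)^4 = ((v i)^2 + s)^2 := by rw [show (4:ℕ) = 2*2 from rfl, pow_mul, e1]
    have e2' : (w s j)^4 = ((v j)^2 - s)^2 := by rw [show (4:ℕ) = 2*2 from rfl, pow_mul, e2]
    rw [e1', e2']; ring
  -- use the local max
  have hev : ∀ᶠ x in nhds v, x ∈ Metric.sphere (0 : EuclideanSpace ℝ (Fin n)) 1 → G x ≤ G v :=
    eventually_nhdsWithin_iff.mp hmax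
  have htend : Filter.Tendsto w (nhds 0) (nhds v) := hw0 ▸ hcont.tendsto 0
  have hev2 : ∀ᶠ s in nhds (0:ℝ),
      w s ∈ Metric.sphere (0 : EuclideanSpace ℝ (Fin n)) 1 → G (w s) ≤ G v :=
    htend.eventually hev
  rw [Metric.eventually_nhds_iff] at hev2
  obtain ⟨ε, hε, hball⟩ := hev2
  refine ⟨ε, hε, fun s hs h1 h2 => ?_⟩
  have := hball (show dist s 0 < ε by simpa [Real.dist_eq] using hs) (hmem s h1 h2)
  rw [hGw s h1 h2] at this
  linarith

lemma quadA {ε D E c : ℝ} (hε : 0 < ε) (hc : 0 < c)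
    (h : ∀ s : ℝ, |s| < ε → -c ≤ s → s ≤ 0 → 2*s*D + s^2*E ≤ 0) : 0 ≤ D := by
  by_contra hD
  push_neg at hD
  set u : ℝ := min (ε/2) (min c (-D/(|E|+1))) with hu_def
  have hE1 : (0:ℝ) < |E| + 1 := by positivity
  have hu : 0 < u := by
    exact lt_min (by linarith) (lt_min hc (div_pos (by linarith) hE1))
  have hu1 : u < ε := lt_of_le_of_lt (min_le_left _ _) (by linarith)
  have hu2 : u ≤ c := le_trans (min_le_right _ _) (min_le_left _ _)
  have hu3 : u * (|E|+1) ≤ -D := by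
    have : u ≤ -D/(|E|+1) :=
      le_trans (min_le_right (ε/2) _) (min_le_right c (-D/(|E|+1)))
    calc u * (|E|+1) ≤ (-D/(|E|+1)) * (|E|+1) := by
          exact mul_le_mul_of_nonneg_right this (le_of_lt hE1)
      _ = -D := by field_simp
  have hEabs : -|E| ≤ E := neg_abs_le E
  have := h (-u) (by rw [abs_neg, abs_of_pos hu]; exact hu1) (by linarith) (by linarith)
  nlinarith [mul_pos hu hu, mul_le_mul_of_nonneg_left hu3 (le_of_lt hu),
    mul_le_mul_of_nonneg_left hEabs (mul_pos hu hu).le]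

lemma quadB {ε D E ci cj : ℝ} (hε : 0 < ε) (hci : 0 < ci) (hcj : 0 < cj)
    (h : ∀ s : ℝ, |s| < ε → -ci ≤ s → s ≤ cj → 2*s*D + s^2*E ≤ 0) : D = 0 ∧ E ≤ 0 := by
  have hE1 : (0:ℝ) < |E| + 1 := by positivity
  have hD : D = 0 := by
    by_contra hD
    have hDabs : 0 < |D| := abs_pos.mpr hD
    set u : ℝ := min (ε/2) (min ci (min cj (|D|/(|E|+1)))) with hu_def
    have hu : 0 < u := by
      exact lt_min (by linarith) (lt_min hci (lt_min hcj (div_pos hDabs hE1)))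
    have hu1 : u < ε := lt_of_le_of_lt (min_le_left _ _) (by linarith)
    have hu2 : u ≤ ci := le_trans (min_le_right _ _) (min_le_left _ _)
    have hu3 : u ≤ cj := le_trans (min_le_right _ _) (le_trans (min_le_right _ _) (min_le_left _ _))
    have hu4 : u * (|E|+1) ≤ |D| := by
      have : u ≤ |D|/(|E|+1) :=
        le_trans (min_le_right _ _) (le_trans (min_le_right _ _) (min_le_right _ _))
      calc u * (|E|+1) ≤ (|D|/(|E|+1)) * (|E|+1) :=
            mul_le_mul_of_nonneg_right this (le_of_lt hE1)
        _ = |D| := by field_simp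
    have hEabs : -|E| ≤ E := neg_abs_le E
    rcases lt_or_gt_of_ne hD with hDneg | hDpos
    · have habs : |D| = -D := abs_of_neg hDneg
      have := h (-u) (by rw [abs_neg, abs_of_pos hu]; exact hu1) (by linarith) (by linarith)
      nlinarith [mul_pos hu hu, mul_le_mul_of_nonneg_left hu4 (le_of_lt hu),
        mul_le_mul_of_nonneg_left hEabs (mul_pos hu hu).le]
    · have habs : |D| = D := abs_of_pos hDpos
      have := h u (by rw [abs_of_pos hu]; exact hu1) (by linarith) hu3
      nlinarith [mul_pos hu hu, mul_le_mul_of_nonneg_left hu4 (le_of_lt hu),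
        mul_le_mul_of_nonneg_left hEabs (mul_pos hu hu).le]
  refine ⟨hD, ?_⟩
  set u : ℝ := min (ε/2) cj with hu_def
  have hu : 0 < u := lt_min (by linarith) hcj
  have := h u (by rw [abs_of_pos hu]; exact lt_of_le_of_lt (min_le_left _ _) (by linarith))
    (by linarith) (min_le_right _ _)
  rw [hD] at this
  nlinarith [mul_pos hu hu]
lemma isLocalMaxOn_single {n : ℕ} (α : Fin n → ℝ) (G : EuclideanSpace ℝ (Fin n) → ℝ)
    (hG : ∀ v, G v = ∑ i, (v i) ^ 4 * α i) {i : Fin n} (hαi : 0 < α i)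
    {c : ℝ} (hc : c = 1 ∨ c = -1) :
    IsLocalMaxOn G (Metric.sphere (0 : EuclideanSpace ℝ (Fin n)) 1)
      (c • EuclideanSpace.single i (1:ℝ)) := by
  classical
  set v : EuclideanSpace ℝ (Fin n) := c • EuclideanSpace.single i (1:ℝ) with hvdef
  have hc2 : c^2 = 1 := by rcases hc with rfl | rfl <;> norm_num
  have hc4 : c^4 = 1 := by rcases hc with rfl | rfl <;> norm_num
  set A : ℝ := ∑ k, |α k| with hAdef
  have hA : ∀ k, α k ≤ A := by
    intro k
    calc α k ≤ |α k| := le_abs_self _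
      _ ≤ A := Finset.single_le_sum (fun k _ => abs_nonneg (α k)) (Finset.mem_univ k)
  have hA0 : 0 ≤ A := Finset.sum_nonneg fun k _ => abs_nonneg _
  have hiA : 0 < α i + A := by linarith
  have hGv : G v = α i := by
    rw [hG, Finset.sum_eq_single i]
    · simp [hvdef, PiLp.smul_apply, EuclideanSpace.single_apply, smul_eq_mul, hc4]
    · intro b _ hb
      simp [hvdef, PiLp.smul_apply, EuclideanSpace.single_apply, hb]
    · simp
  have hgoal : ∀ᶠ x in nhdsWithin v (Metric.sphere (0 : EuclideanSpace ℝ (Fin n)) 1),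
      G x ≤ G v := by
    rw [eventually_nhdsWithin_iff, Metric.eventually_nhds_iff]
    refine ⟨Real.sqrt (α i / (α i + A)), Real.sqrt_pos.mpr (div_pos hαi hiA), ?_⟩
    intro x hdist hx
    have hs := sum_sq_eq_one' hx
    have hxi2 : (x i)^2 ≤ 1 := by
      rw [← hs]
      exact Finset.single_le_sum (fun k _ => sq_nonneg (x k)) (Finset.mem_univ i)
    -- dist squared
    have hd2 : ∑ k, (x k - v k)^2 < α i / (α i + A) := by
      have h1 : (dist x v)^2 < (Real.sqrt (α i / (α i + A)))^2 :=
        pow_lt_pow_left₀ hdist dist_nonneg two_ne_zero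
      rw [Real.sq_sqrt (le_of_lt (div_pos hαi hiA))] at h1
      rw [EuclideanSpace.dist_eq, Real.sq_sqrt (Finset.sum_nonneg fun k _ => sq_nonneg _)] at h1
      simpa [Real.dist_eq, sq_abs] using h1
    have hexp : ∑ k, (x k - v k)^2 = 2 - 2*c*(x i) := by
      have hterm : ∀ k, (x k - v k)^2
          = (x k)^2 - (if k = i then 2*c*x k - c^2 else 0) := by
        intro k
        by_cases hk : k = i
        · subst hk
          simp only [hvdef, PiLp.smul_apply, EuclideanSpace.single_apply, if_pos rfl,
            smul_eq_mul, mul_one]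
          norm_num
          ring
        · simp [hvdef, PiLp.smul_apply, EuclideanSpace.single_apply, hk]
      rw [Finset.sum_congr rfl (fun k _ => hterm k), Finset.sum_sub_distrib,
        Finset.sum_ite_eq' Finset.univ i, hs]
      simp only [Finset.mem_univ, if_pos]
      nlinarith [hc2]
    have htb : (1 - (x i)^2) * (α i + A) ≤ α i := by
      have h2 : 1 - (x i)^2 ≤ 2 - 2*c*(x i) := by nlinarith [sq_nonneg (c - x i)]
      have h3 : 1 - (x i)^2 < α i / (α i + A) := lt_of_le_of_lt (hexp ▸ h2) hd2
      calc (1 - (x i)^2) * (α i + A) ≤ (α i / (α i + A)) * (α i + A) :=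
            mul_le_mul_of_nonneg_right h3.le hiA.le
        _ = α i := by field_simp
    have hbound : G x ≤ (x i)^4 * α i + A * (1 - (x i)^2)^2 := by
      rw [hG, ← Finset.add_sum_erase _ _ (Finset.mem_univ i)]
      have hrest : ∑ k ∈ Finset.univ.erase i, (x k)^4 * α k ≤ A * (1 - (x i)^2)^2 := by
        have step1 : ∑ k ∈ Finset.univ.erase i, (x k)^4 * α k
            ≤ ∑ k ∈ Finset.univ.erase i, (x k)^4 * A := by
          apply Finset.sum_le_sum
          intro k _
          exact mul_le_mul_of_nonneg_left (hA k) (by positivity)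
        have step2 : ∑ k ∈ Finset.univ.erase i, (x k)^4
            ≤ (∑ k ∈ Finset.univ.erase i, (x k)^2)^2 := by
          have := Finset.sum_sq_le_sq_sum_of_nonneg
            (f := fun k => (x k)^2) (s := Finset.univ.erase i)
            (fun k _ => sq_nonneg (x k))
          calc ∑ k ∈ Finset.univ.erase i, (x k)^4
              = ∑ k ∈ Finset.univ.erase i, ((x k)^2)^2 := by
                apply Finset.sum_congr rfl; intro k _; ring
            _ ≤ _ := this
        have step3 : ∑ k ∈ Finset.univ.erase i, (x k)^2 = 1 - (x i)^2 := by
          have := Finset.add_sum_erase Finset.univ (fun k => (x k)^2) (Finset.mem_univ i)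
          rw [hs] at this
          simp only at this
          linarith
        calc ∑ k ∈ Finset.univ.erase i, (x k)^4 * α k
            ≤ ∑ k ∈ Finset.univ.erase i, (x k)^4 * A := step1
          _ = (∑ k ∈ Finset.univ.erase i, (x k)^4) * A := by rw [← Finset.sum_mul]
          _ ≤ (1 - (x i)^2)^2 * A := mul_le_mul_of_nonneg_right (step3 ▸ step2) hA0
          _ = A * (1 - (x i)^2)^2 := by ring
      linarith
    rw [hGv]
    have ht0 : 0 ≤ 1 - (x i)^2 := by linarith
    nlinarith [mul_nonneg ht0 hαi.le]
  exact hgoal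

open Finset in
lemma maxSet {n : ℕ} (α : Fin n → ℝ) (hα : ∀ i, α i ≠ 0)
    (G : EuclideanSpace ℝ (Fin n) → ℝ)
    (hG : ∀ v, G v = ∑ i, (v i) ^ 4 * α i) (hpos : ∃ i, 0 < α i) :
    {v | v ∈ Metric.sphere (0 : EuclideanSpace ℝ (Fin n)) 1 ∧
          IsLocalMaxOn G (Metric.sphere (0 : EuclideanSpace ℝ (Fin n)) 1) v}
      = {v | ∃ i, 0 < α i ∧
          (v = EuclideanSpace.single i (1 : ℝ) ∨ v = -EuclideanSpace.single i (1 : ℝ))} := by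
  classical
  ext v
  simp only [Set.mem_setOf_eq]
  constructor
  · rintro ⟨hv, hmax⟩
    have hsum := sum_sq_eq_one' hv
    have hex : ∃ i, v i ≠ 0 := by
      by_contra h
      push_neg at h
      simp [h] at hsum
    obtain ⟨i, hvi⟩ := hex
    have keyA : ∀ p q : Fin n, p ≠ q → v p ≠ 0 → v q = 0 → 0 < α p := by
      intro p q hpq hvp hvq
      obtain ⟨ε, hε, hquad⟩ := perturb hG hv hmax hpq
      have hp2 : 0 < (v p)^2 := by positivity
      have h0 : 0 ≤ (v p)^2 * α p - (v q)^2 * α q := by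
        apply quadA hε hp2
        intro s hs h1 h2
        exact hquad s hs h1 (by rw [hvq]; simpa using h2)
      rw [hvq] at h0
      simp only [ne_eq, zero_pow, mul_zero, sub_zero] at h0
      rcases lt_or_gt_of_ne (hα p) with h | h
      · nlinarith
      · exact h
    have keyB : ∀ p q : Fin n, p ≠ q → v p ≠ 0 → v q ≠ 0 →
        (v p)^2 * α p = (v q)^2 * α q ∧ α p + α q ≤ 0 := by
      intro p q hpq hvp hvq
      obtain ⟨ε, hε, hquad⟩ := perturb hG hv hmax hpq
      have hp2 : 0 < (v p)^2 := by positivity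
      have hq2 : 0 < (v q)^2 := by positivity
      have := quadB hε hp2 hq2 hquad
      exact ⟨by linarith [this.1], this.2⟩
    have hsupp : ∀ j, j ≠ i → v j = 0 := by
      intro j hji
      by_contra hvj
      obtain ⟨hDij, hEij⟩ := keyB i j (Ne.symm hji) hvi hvj
      have hvi2 : 0 < (v i)^2 := by positivity
      have hvj2 : 0 < (v j)^2 := by positivity
      have hαineg : α i < 0 := by
        rcases lt_or_gt_of_ne (hα i) with h | h
        · exact h
        · exfalso
          have hj : 0 < α j := by nlinarith
          linarith
      obtain ⟨k, hk⟩ := hpos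
      have hki : k ≠ i := by intro h; rw [h] at hk; linarith
      by_cases hvk : v k = 0
      · have := keyA i k (Ne.symm hki) hvi hvk
        linarith
      · obtain ⟨hDik, _⟩ := keyB i k (Ne.symm hki) hvi hvk
        have hvk2 : 0 < (v k)^2 := by positivity
        nlinarith
    have hvi2 : (v i)^2 = 1 := by
      rw [← hsum, Finset.sum_eq_single i]
      · intro b _ hb; rw [hsupp b hb]; ring
      · simp
    have hvipm : v i = 1 ∨ v i = -1 := by
      have : (v i - 1) * (v i + 1) = 0 := by nlinarith
      rcases mul_eq_zero.mp this with h | h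
      · left; linarith
      · right; linarith
    have hαipos : 0 < α i := by
      by_cases hexj : ∃ j, j ≠ i
      · obtain ⟨j, hj⟩ := hexj
        exact keyA i j (Ne.symm hj) hvi (hsupp j hj)
      · push_neg at hexj
        obtain ⟨k, hk⟩ := hpos
        rwa [hexj k] at hk
    refine ⟨i, hαipos, ?_⟩
    rcases hvipm with h1 | h1
    · left
      ext k
      by_cases hk : k = i
      · subst hk; simp [EuclideanSpace.single_apply, h1]
      · simp [EuclideanSpace.single_apply, hk, hsupp k hk]
    · right
      ext k
      by_cases hk : k = i
      · subst hk; simp [EuclideanSpace.single_apply, h1]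
      · simp [EuclideanSpace.single_apply, hk, hsupp k hk]
  · rintro ⟨i, hαi, rfl | rfl⟩
    · refine ⟨?_, ?_⟩
      · rw [mem_sphere_zero_iff_norm, EuclideanSpace.norm_single, norm_one]
      · have := isLocalMaxOn_single α G hG hαi (Or.inl rfl : (1:ℝ) = 1 ∨ (1:ℝ) = -1)
        simpa using this
    · refine ⟨?_, ?_⟩
      · rw [mem_sphere_zero_iff_norm, norm_neg, EuclideanSpace.norm_single, norm_one]
      · have := isLocalMaxOn_single α G hG hαi (Or.inr rfl : (-1:ℝ) = 1 ∨ (-1:ℝ) = -1)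
        have he : (-1 : ℝ) • EuclideanSpace.single i (1:ℝ)
            = -EuclideanSpace.single i (1:ℝ) := by
          rw [neg_one_smul]
        rwa [he] at this

/-- for nonzero reals $α_i$ and $G(v) = ∑_i v_i^4 α_i$ on the unit
sphere, if some $α_i > 0$ then the local maxima of $G$ on the sphere are exactly
$\{±e_i : α_i > 0\}$, and if some $α_i < 0$ then the local minima are exactly
$\{±e_i : α_i < 0\}$. -/
theorem localExtrema_of_quartic_on_sphere
    {n : ℕ} (α : Fin n → ℝ) (hα : ∀ i, α i ≠ 0)
    (G : EuclideanSpace ℝ (Fin n) → ℝ)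
    (hG : ∀ v, G v = ∑ i, (v i) ^ 4 * α i) :
    ((∃ i, 0 < α i) →
      {v | v ∈ Metric.sphere (0 : EuclideanSpace ℝ (Fin n)) 1 ∧
            IsLocalMaxOn G (Metric.sphere (0 : EuclideanSpace ℝ (Fin n)) 1) v}
        = {v | ∃ i, 0 < α i ∧
            (v = EuclideanSpace.single i (1 : ℝ) ∨ v = -EuclideanSpace.single i (1 : ℝ))}) ∧
    ((∃ i, α i < 0) →
      {v | v ∈ Metric.sphere (0 : EuclideanSpace ℝ (Fin n)) 1 ∧
            IsLocalMinOn G (Metric.sphere (0 : EuclideanSpace ℝ (Fin n)) 1) v}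
        = {v | ∃ i, α i < 0 ∧
            (v = EuclideanSpace.single i (1 : ℝ) ∨ v = -EuclideanSpace.single i (1 : ℝ))}) := by
  constructor
  · intro hpos
    exact maxSet α hα G hG hpos
  · intro hneg
    obtain ⟨k, hk⟩ := hneg
    have h2 := maxSet (fun i => -α i) (fun i => neg_ne_zero.mpr (hα i)) (fun v => -G v)
      (by intro v
          show -G v = ∑ i, (v i)^4 * (-α i)
          rw [hG, ← Finset.sum_neg_distrib]
          exact Finset.sum_congr rfl fun j _ => by ring)
      ⟨k, neg_pos.mpr hk⟩
    ext v
    simp only [Set.mem_setOf_eq]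
    constructor
    · rintro ⟨h1, hmin⟩
      have := (Set.ext_iff.mp h2 v).mp ⟨h1, hmin.neg⟩
      obtain ⟨i, hi, h⟩ := this
      exact ⟨i, neg_pos.mp hi, h⟩
    · rintro ⟨i, hi, h⟩
      obtain ⟨h1, hmax⟩ := (Set.ext_iff.mp h2 v).mpr ⟨i, neg_pos.mpr hi, h⟩
      refine ⟨h1, ?_⟩
      have := hmax.neg
      simpa using this
end

section
/- The fourth k-statistic is an unbiased estimator of the fourth cumulant: if y^{(1)}, …, y^{(N)} (with N ≥ 4) are i.i.d. copies of a zero-mean random vector Y in ℝ^n with finite fourth moments, then for all indices i, j, k, l, E[k(y_i, y_j, y_k, y_l)] = Cum(Y_i, Y_j, Y_k, Y_l). -/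
open MeasureTheory ProbabilityTheory Matrix

/- ========= auxiliary lemmas ========= -/

lemma kphi_one' {N : ℕ} (r s t u : Fin N) (h : ({r, s, t, u} : Finset (Fin N)).card = 1) :
    kphi N r s t u = 1 := by unfold kphi; rw [h]; rfl

lemma kphi_two' {N : ℕ} (r s t u : Fin N) (h : ({r, s, t, u} : Finset (Fin N)).card = 2) :
    kphi N r s t u = -1 / ((N : ℝ) - 1) := by unfold kphi; rw [h]; rfl

lemma sum_ite_ne' {N : ℕ} (r : Fin N) (X : ℝ) :
    (∑ t : Fin N, if r = t then 0 else X) = ((N : ℝ) - 1) * X := by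
  have h : ∀ t : Fin N, (if r = t then (0:ℝ) else X) = X - (if r = t then X else 0) :=
    fun t => by by_cases h : r = t <;> simp [h]
  simp_rw [h]
  rw [Finset.sum_sub_distrib, Finset.sum_const, Finset.sum_ite_eq]
  simp [Finset.card_univ, nsmul_eq_mul]
  ring

section Aux
variable {Ω : Type*} [MeasurableSpace Ω] {μ : Measure Ω} {n N : ℕ}
  {y : Fin N → Ω → Fin n → ℝ}

lemma aux_vanish (hymeas : ∀ r, Measurable (y r))
    (hindep : iIndepFun y μ)
    (hmean : ∀ r c, ∫ ω, y r ω c ∂μ = 0)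
    {r s t a : Fin N} (c1 c2 c3 c : Fin n) (h1 : r ≠ a) (h2 : s ≠ a) (h3 : t ≠ a) :
    ∫ ω, y r ω c1 * y s ω c2 * y t ω c3 * y a ω c ∂μ = 0 := by
  classical
  have hd : Disjoint ({r, s, t} : Finset (Fin N)) ({a} : Finset (Fin N)) := by
    simp only [Finset.disjoint_singleton_right, Finset.mem_insert, Finset.mem_singleton]
    push_neg
    exact ⟨fun h => h1 h.symm, fun h => h2 h.symm, fun h => h3 h.symm⟩
  have hIF := hindep.indepFun_finset {r, s, t} {a} hd hymeas
  have hrm : r ∈ ({r, s, t} : Finset (Fin N)) := by simp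
  have hsm : s ∈ ({r, s, t} : Finset (Fin N)) := by simp
  have htm : t ∈ ({r, s, t} : Finset (Fin N)) := by simp
  have ham : a ∈ ({a} : Finset (Fin N)) := by simp
  have hgm : Measurable (fun v : (∀ _ : ({r, s, t} : Finset (Fin N)), Fin n → ℝ) =>
      v ⟨r, hrm⟩ c1 * v ⟨s, hsm⟩ c2 * v ⟨t, htm⟩ c3) := by fun_prop
  have hhm : Measurable (fun v : (∀ _ : ({a} : Finset (Fin N)), Fin n → ℝ) =>
      v ⟨a, ham⟩ c) := by fun_prop
  have e1 : (∫ ω, y r ω c1 * y s ω c2 * y t ω c3 * y a ω c ∂μ)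
      = ∫ ω, (y r ω c1 * y s ω c2 * y t ω c3) * y a ω c ∂μ :=
    integral_congr_ae (Filter.Eventually.of_forall fun ω => by ring)
  have hIF2 : IndepFun (fun ω => y r ω c1 * y s ω c2 * y t ω c3)
      (fun ω => y a ω c) μ := hIF.comp hgm hhm
  have := hIF2.integral_fun_mul_eq_mul_integral
    (((((hymeas r).eval (a := c1)).mul ((hymeas s).eval (a := c2))).mul
      ((hymeas t).eval (a := c3))).aestronglyMeasurable)
    (((hymeas a).eval (a := c)).aestronglyMeasurable)
  rw [e1, this, hmean a c, mul_zero]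

lemma aux_pair (hymeas : ∀ r, Measurable (y r))
    (hindep : iIndepFun y μ)
    {r t : Fin N} (a b c d : Fin n) (hrt : r ≠ t) :
    ∫ ω, y r ω a * y r ω b * y t ω c * y t ω d ∂μ
      = (∫ ω, y r ω a * y r ω b ∂μ) * (∫ ω, y t ω c * y t ω d ∂μ) := by
  have hIF : IndepFun (y r) (y t) μ := hindep.indepFun hrt
  have hm1 : Measurable (fun v : Fin n → ℝ => v a * v b) := by fun_prop
  have hm2 : Measurable (fun v : Fin n → ℝ => v c * v d) := by fun_prop
  have hIF2 : IndepFun (fun ω => y r ω a * y r ω b) (fun ω => y t ω c * y t ω d) μ :=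
    hIF.comp hm1 hm2
  have e1 : (∫ ω, y r ω a * y r ω b * y t ω c * y t ω d ∂μ)
      = ∫ ω, (y r ω a * y r ω b) * (y t ω c * y t ω d) ∂μ :=
    integral_congr_ae (Filter.Eventually.of_forall fun ω => by ring)
  have := hIF2.integral_fun_mul_eq_mul_integral
    (((hymeas r).eval (a := a)).mul ((hymeas r).eval (a := b))).aestronglyMeasurable
    (((hymeas t).eval (a := c)).mul ((hymeas t).eval (a := d))).aestronglyMeasurable
  rw [e1, this]

end Aux

/- ========= sum evaluation lemmas ========= -/

lemma sum4_diag {N : ℕ} (c : ℝ) :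
    (∑ r : Fin N, ∑ s : Fin N, ∑ t : Fin N, ∑ u : Fin N,
      if t = u then (if s = t then (if r = s then c else 0) else 0) else 0)
    = (N : ℝ) * c := by
  simp [Finset.sum_ite_eq, Finset.sum_const, Finset.card_univ, nsmul_eq_mul]

lemma sum4_pairB {N : ℕ} (c : ℝ) :
    (∑ r : Fin N, ∑ s : Fin N, ∑ t : Fin N, ∑ u : Fin N,
      if t = u then (if r = s then (if r = t then 0 else c) else 0) else 0)
    = (N : ℝ) * (((N : ℝ) - 1) * c) := by
  have e1 : ∀ r s t : Fin N,
      (∑ u : Fin N, if t = u then (if r = s then (if r = t then (0:ℝ) else c) else 0) else 0)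
      = (if r = s then (if r = t then (0:ℝ) else c) else 0) := fun r s t => by
    rw [Finset.sum_ite_eq]; simp
  simp_rw [e1]
  have e2 : ∀ r s : Fin N,
      (∑ t : Fin N, if r = s then (if r = t then (0:ℝ) else c) else 0)
      = ((N : ℝ) - 1) * (if r = s then c else 0) := fun r s => by
    by_cases h : r = s
    · simp only [if_pos h, sum_ite_ne']
    · simp [h]
  simp_rw [e2]
  have e3 : ∀ r : Fin N, (∑ s : Fin N, ((N : ℝ) - 1) * (if r = s then c else 0))
      = ((N : ℝ) - 1) * c := fun r => by
    rw [← Finset.mul_sum, Finset.sum_ite_eq]; simp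
  simp_rw [e3]
  simp [Finset.sum_const, Finset.card_univ, nsmul_eq_mul]

lemma sum4_pairC {N : ℕ} (c : ℝ) :
    (∑ r : Fin N, ∑ s : Fin N, ∑ t : Fin N, ∑ u : Fin N,
      if s = u then (if r = t then (if r = s then 0 else c) else 0) else 0)
    = (N : ℝ) * (((N : ℝ) - 1) * c) := by
  have e1 : ∀ r s t : Fin N,
      (∑ u : Fin N, if s = u then (if r = t then (if r = s then (0:ℝ) else c) else 0) else 0)
      = (if r = t then (if r = s then (0:ℝ) else c) else 0) := fun r s t => by
    rw [Finset.sum_ite_eq]; simp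
  simp_rw [e1]
  have e2 : ∀ r s : Fin N,
      (∑ t : Fin N, if r = t then (if r = s then (0:ℝ) else c) else 0)
      = (if r = s then (0:ℝ) else c) := fun r s => by
    rw [Finset.sum_ite_eq]; simp
  simp_rw [e2, sum_ite_ne']
  simp [Finset.sum_const, Finset.card_univ, nsmul_eq_mul]

lemma sum4_pairD {N : ℕ} (c : ℝ) :
    (∑ r : Fin N, ∑ s : Fin N, ∑ t : Fin N, ∑ u : Fin N,
      if r = u then (if s = t then (if r = s then 0 else c) else 0) else 0)
    = (N : ℝ) * (((N : ℝ) - 1) * c) := by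
  have e1 : ∀ r s t : Fin N,
      (∑ u : Fin N, if r = u then (if s = t then (if r = s then (0:ℝ) else c) else 0) else 0)
      = (if s = t then (if r = s then (0:ℝ) else c) else 0) := fun r s t => by
    rw [Finset.sum_ite_eq]; simp
  simp_rw [e1]
  have e2 : ∀ r s : Fin N,
      (∑ t : Fin N, if s = t then (if r = s then (0:ℝ) else c) else 0)
      = (if r = s then (0:ℝ) else c) := fun r s => by
    rw [Finset.sum_ite_eq]; simp
  simp_rw [e2, sum_ite_ne']
  simp [Finset.sum_const, Finset.card_univ, nsmul_eq_mul]
/-- the fourth k-statistic is an unbiased estimator of the fourth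
cumulant: for an i.i.d. sample $y^{(1)},…,y^{(N)}$ ($N ≥ 4$) of a zero-mean
random vector $Y$ with finite fourth moments,
$E[k(y_i,y_j,y_k,y_l)] = \mathrm{Cum}(Y_i,Y_j,Y_k,Y_l)$. -/
theorem kstat_unbiased
    {Ω : Type*} [MeasurableSpace Ω] (μ : Measure Ω) [IsProbabilityMeasure μ] {n N : ℕ}
    (hN : 4 ≤ N)
    (Y : Ω → Fin n → ℝ) (hYmeas : Measurable Y)
    (hYmom : ∀ i, MemLp (fun ω => Y ω i) 4 μ)
    (hYmean : ∀ i, ∫ ω, Y ω i ∂μ = 0)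
    (y : Fin N → Ω → Fin n → ℝ)
    (hymeas : ∀ r, Measurable (y r))
    (hident : ∀ r, Measure.map (y r) μ = Measure.map Y μ)
    (hindep : iIndepFun y μ) :
    ∀ i j k l : Fin n,
      (∫ ω, kstat (fun r => y r ω i) (fun r => y r ω j)
          (fun r => y r ω k) (fun r => y r ω l) ∂μ)
        = cum4 μ Y i j k l := by
  intro i j k l
  classical
  -- transfer of moments from Y to the samples
  have hmean : ∀ (r : Fin N) (c : Fin n), ∫ ω, y r ω c ∂μ = 0 := by
    intro r c
    have hg : Measurable (fun v : Fin n → ℝ => v c) := measurable_pi_apply c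
    calc ∫ ω, y r ω c ∂μ
        = ∫ v, v c ∂(Measure.map (y r) μ) :=
          (integral_map (hymeas r).aemeasurable hg.aestronglyMeasurable).symm
      _ = ∫ v, v c ∂(Measure.map Y μ) := by rw [hident r]
      _ = ∫ ω, Y ω c ∂μ := integral_map hYmeas.aemeasurable hg.aestronglyMeasurable
      _ = 0 := hYmean c
  have hm2 : ∀ (r : Fin N) (a b : Fin n),
      ∫ ω, y r ω a * y r ω b ∂μ = ∫ ω, Y ω a * Y ω b ∂μ := by
    intro r a b
    have hg : Measurable (fun v : Fin n → ℝ => v a * v b) := by fun_prop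
    calc ∫ ω, y r ω a * y r ω b ∂μ
        = ∫ v, v a * v b ∂(Measure.map (y r) μ) :=
          (integral_map (hymeas r).aemeasurable hg.aestronglyMeasurable).symm
      _ = ∫ v, v a * v b ∂(Measure.map Y μ) := by rw [hident r]
      _ = ∫ ω, Y ω a * Y ω b ∂μ := integral_map hYmeas.aemeasurable hg.aestronglyMeasurable
  have hm4 : ∀ r : Fin N,
      ∫ ω, y r ω i * y r ω j * y r ω k * y r ω l ∂μ
        = ∫ ω, Y ω i * Y ω j * Y ω k * Y ω l ∂μ := by
    intro r
    have hg : Measurable (fun v : Fin n → ℝ => v i * v j * v k * v l) := by fun_prop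
    calc ∫ ω, y r ω i * y r ω j * y r ω k * y r ω l ∂μ
        = ∫ v, v i * v j * v k * v l ∂(Measure.map (y r) μ) :=
          (integral_map (hymeas r).aemeasurable hg.aestronglyMeasurable).symm
      _ = ∫ v, v i * v j * v k * v l ∂(Measure.map Y μ) := by rw [hident r]
      _ = ∫ ω, Y ω i * Y ω j * Y ω k * Y ω l ∂μ :=
          integral_map hYmeas.aemeasurable hg.aestronglyMeasurable
  -- membership in L⁴ and integrability of quadruple products
  have hmem : ∀ (r : Fin N) (c : Fin n), MemLp (fun ω => y r ω c) 4 μ := by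
    intro r c
    have hg : AEStronglyMeasurable (fun v : Fin n → ℝ => v c) (Measure.map Y μ) :=
      (measurable_pi_apply c).aestronglyMeasurable
    have h1 : MemLp (fun v : Fin n → ℝ => v c) 4 (Measure.map Y μ) :=
      (memLp_map_measure_iff hg hYmeas.aemeasurable).mpr (hYmom c)
    have h2 : MemLp (fun v : Fin n → ℝ => v c) 4 (Measure.map (y r) μ) := by
      rw [hident r]; exact h1
    exact (memLp_map_measure_iff (by rw [hident r]; exact hg) (hymeas r).aemeasurable).mp h2
  have hexp2 : (2 : ENNReal)⁻¹ = 4⁻¹ + 4⁻¹ := by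
    have : (1 : ENNReal) / 2 = 1 / 4 + 1 / 4 := by
      rw [show (4 : ENNReal) = 2 * 2 by norm_num, ENNReal.div_add_div_same]
      rw [ENNReal.div_eq_div_iff] <;> norm_num
    simpa using this
  have hexp1 : (1 : ENNReal)⁻¹ = 2⁻¹ + 2⁻¹ := by
    have : (1 : ENNReal) / 1 = 1 / 2 + 1 / 2 := by
      rw [ENNReal.div_add_div_same, ENNReal.div_eq_div_iff] <;> norm_num
    simpa using this
  have hprod2 : ∀ (r s : Fin N) (a b : Fin n),
      MemLp (fun ω => y r ω a * y s ω b) 2 μ := by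
    intro r s a b
    have := (hmem s b).smul (hmem r a) (p := 4) (q := 4) (r := 2) (hpqr := ⟨hexp2.symm⟩)
    exact this
  have hint4 : ∀ r s t u : Fin N,
      Integrable (fun ω => y r ω i * y s ω j * y t ω k * y u ω l) μ := by
    intro r s t u
    have h := (hprod2 t u k l).smul (hprod2 r s i j) (p := 2) (q := 2) (r := 1)
      (hpqr := ⟨hexp1.symm⟩)
    have h' : MemLp (fun ω => y r ω i * y s ω j * y t ω k * y u ω l) 1 μ := by
      have heq : (fun ω => y r ω i * y s ω j * y t ω k * y u ω l)
          = fun ω => (y r ω i * y s ω j) * (y t ω k * y u ω l) := funext fun ω => by ring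
      rw [heq]
      exact h
    exact memLp_one_iff_integrable.mp h'
  -- vanishing lemmas: some sample index occurs exactly once
  have hE1 : ∀ {r s t u : Fin N}, s ≠ r → t ≠ r → u ≠ r →
      ∫ ω, y r ω i * y s ω j * y t ω k * y u ω l ∂μ = 0 := by
    intro r s t u hs ht hu
    have e : (∫ ω, y r ω i * y s ω j * y t ω k * y u ω l ∂μ)
        = ∫ ω, y s ω j * y t ω k * y u ω l * y r ω i ∂μ :=
      integral_congr_ae (Filter.Eventually.of_forall fun ω => by ring)
    rw [e]; exact aux_vanish hymeas hindep hmean j k l i hs ht hu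
  have hE2 : ∀ {r s t u : Fin N}, r ≠ s → t ≠ s → u ≠ s →
      ∫ ω, y r ω i * y s ω j * y t ω k * y u ω l ∂μ = 0 := by
    intro r s t u hr ht hu
    have e : (∫ ω, y r ω i * y s ω j * y t ω k * y u ω l ∂μ)
        = ∫ ω, y r ω i * y t ω k * y u ω l * y s ω j ∂μ :=
      integral_congr_ae (Filter.Eventually.of_forall fun ω => by ring)
    rw [e]; exact aux_vanish hymeas hindep hmean i k l j hr ht hu
  have hE3 : ∀ {r s t u : Fin N}, r ≠ t → s ≠ t → u ≠ t →
      ∫ ω, y r ω i * y s ω j * y t ω k * y u ω l ∂μ = 0 := by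
    intro r s t u hr hs hu
    have e : (∫ ω, y r ω i * y s ω j * y t ω k * y u ω l ∂μ)
        = ∫ ω, y r ω i * y s ω j * y u ω l * y t ω k ∂μ :=
      integral_congr_ae (Filter.Eventually.of_forall fun ω => by ring)
    rw [e]; exact aux_vanish hymeas hindep hmean i j l k hr hs hu
  have hE4 : ∀ {r s t u : Fin N}, r ≠ u → s ≠ u → t ≠ u →
      ∫ ω, y r ω i * y s ω j * y t ω k * y u ω l ∂μ = 0 := by
    intro r s t u hr hs ht
    exact aux_vanish hymeas hindep hmean i j k l hr hs ht
  -- pair lemmas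
  have hB : ∀ {r t : Fin N}, r ≠ t →
      (∫ ω, y r ω i * y r ω j * y t ω k * y t ω l ∂μ)
        = (∫ ω, Y ω i * Y ω j ∂μ) * (∫ ω, Y ω k * Y ω l ∂μ) := by
    intro r t h
    rw [aux_pair hymeas hindep i j k l h, hm2, hm2]
  have hC : ∀ {r s : Fin N}, r ≠ s →
      (∫ ω, y r ω i * y s ω j * y r ω k * y s ω l ∂μ)
        = (∫ ω, Y ω i * Y ω k ∂μ) * (∫ ω, Y ω j * Y ω l ∂μ) := by
    intro r s h
    have e : (∫ ω, y r ω i * y s ω j * y r ω k * y s ω l ∂μ)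
        = ∫ ω, y r ω i * y r ω k * y s ω j * y s ω l ∂μ :=
      integral_congr_ae (Filter.Eventually.of_forall fun ω => by ring)
    rw [e, aux_pair hymeas hindep i k j l h, hm2, hm2]
  have hD : ∀ {r s : Fin N}, r ≠ s →
      (∫ ω, y r ω i * y s ω j * y s ω k * y r ω l ∂μ)
        = (∫ ω, Y ω i * Y ω l ∂μ) * (∫ ω, Y ω j * Y ω k ∂μ) := by
    intro r s h
    have e : (∫ ω, y r ω i * y s ω j * y s ω k * y r ω l ∂μ)
        = ∫ ω, y r ω i * y r ω l * y s ω j * y s ω k ∂μ :=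
      integral_congr_ae (Filter.Eventually.of_forall fun ω => by ring)
    rw [e, aux_pair hymeas hindep i l j k h, hm2, hm2]
  -- the per-term identity
  have hterm : ∀ r s t u : Fin N,
      kphi N r s t u * (∫ ω, y r ω i * y s ω j * y t ω k * y u ω l ∂μ) =
      (if t = u then (if s = t then (if r = s then
          (∫ ω, Y ω i * Y ω j * Y ω k * Y ω l ∂μ) else 0) else 0) else 0)
    + (if t = u then (if r = s then (if r = t then 0 else
          -1 / ((N:ℝ)-1) * ((∫ ω, Y ω i * Y ω j ∂μ) * (∫ ω, Y ω k * Y ω l ∂μ))) else 0) else 0)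
    + (if s = u then (if r = t then (if r = s then 0 else
          -1 / ((N:ℝ)-1) * ((∫ ω, Y ω i * Y ω k ∂μ) * (∫ ω, Y ω j * Y ω l ∂μ))) else 0) else 0)
    + (if r = u then (if s = t then (if r = s then 0 else
          -1 / ((N:ℝ)-1) * ((∫ ω, Y ω i * Y ω l ∂μ) * (∫ ω, Y ω j * Y ω k ∂μ))) else 0) else 0)
      := by
    intro r s t u
    by_cases h1 : r = s
    · subst h1
      by_cases h2 : t = u
      · subst h2
        by_cases h3 : r = t
        · subst h3
          rw [kphi_one' _ _ _ _ (by simp), hm4 r]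
          simp
        · rw [kphi_two' _ _ _ _ (by
            rw [show ({r, r, t, t} : Finset (Fin N)) = {r, t} by ext x; simp; try tauto]
            exact Finset.card_pair h3), hB h3]
          simp [h3]
      · by_cases h3 : t = r
        · have hu : r ≠ u := h3 ▸ h2
          rw [hE4 hu hu h2, mul_zero]
          simp [h2, hu]
        · have hrt : r ≠ t := fun h => h3 h.symm
          by_cases h4 : u = r
          · rw [hE3 hrt hrt (h4 ▸ hrt), mul_zero]
            simp [h2, h3, h4, hrt]
          · have hut : u ≠ t := fun h => h2 h.symm
            have hru : r ≠ u := fun h => h4 h.symm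
            rw [hE3 hrt hrt hut, mul_zero]
            simp [h2, hrt, hru]
    · by_cases h2 : s = u
      · subst h2
        by_cases h3 : r = t
        · subst h3
          rw [kphi_two' _ _ _ _ (by
            rw [show ({r, s, r, s} : Finset (Fin N)) = {r, s} by ext x; simp; try tauto]
            exact Finset.card_pair h1), hC h1]
          simp [h1]
        · rw [hE1 (fun h => h1 h.symm) (fun h => h3 h.symm) (fun h => h1 h.symm), mul_zero]
          simp [h1, h3]
      · by_cases h3 : r = u
        · by_cases h4 : s = t
          · rw [← h4, ← h3]
            have hsr : s ≠ r := fun h => h1 h.symm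
            rw [kphi_two' _ _ _ _ (by
              rw [show ({r, s, s, r} : Finset (Fin N)) = {r, s} by ext x; simp; try tauto]
              exact Finset.card_pair h1), hD h1]
            simp [h1, hsr]
          · have hts : t ≠ s := fun h => h4 h.symm
            have hus : u ≠ s := h3 ▸ h1
            rw [hE2 h1 hts hus, mul_zero]
            have hsu : s ≠ u := fun h => hus h.symm
            have hst : s ≠ t := h4
            simp [h1, h2, hsu, hus, hst, hts, h3]
        · by_cases h4 : r = t
          · have htu : t ≠ u := h4 ▸ h3
            rw [hE4 h3 h2 htu, mul_zero]
            simp [h1, h2, h3, htu]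
          · rw [hE1 (fun h => h1 h.symm) (fun h => h4 h.symm) (fun h => h3 h.symm), mul_zero]
            simp [h1, h3, h4]
  -- main computation
  have hks : (fun ω => kstat (fun r => y r ω i) (fun r => y r ω j)
        (fun r => y r ω k) (fun r => y r ω l))
      = fun ω => (1 / (N : ℝ)) * ∑ p : Fin N × Fin N × Fin N × Fin N,
          kphi N p.1 p.2.1 p.2.2.1 p.2.2.2 *
            (y p.1 ω i * y p.2.1 ω j * y p.2.2.1 ω k * y p.2.2.2 ω l) := by
    funext ω
    unfold kstat
    congr 1
    simp only [Fintype.sum_prod_type]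
    refine Finset.sum_congr rfl fun r _ => Finset.sum_congr rfl fun s _ =>
      Finset.sum_congr rfl fun t _ => Finset.sum_congr rfl fun u _ => by ring
  rw [hks, integral_const_mul, integral_finset_sum _
    (fun p _ => ((hint4 p.1 p.2.1 p.2.2.1 p.2.2.2).const_mul _))]
  have hper : ∀ p : Fin N × Fin N × Fin N × Fin N,
      (∫ ω, kphi N p.1 p.2.1 p.2.2.1 p.2.2.2 *
          (y p.1 ω i * y p.2.1 ω j * y p.2.2.1 ω k * y p.2.2.2 ω l) ∂μ)
      = kphi N p.1 p.2.1 p.2.2.1 p.2.2.2 *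
          (∫ ω, y p.1 ω i * y p.2.1 ω j * y p.2.2.1 ω k * y p.2.2.2 ω l ∂μ) :=
    fun p => integral_const_mul _ _
  simp only [hper]
  simp only [Fintype.sum_prod_type]
  have := fun (r s t u : Fin N) => hterm r s t u
  simp only [hterm]
  simp only [Finset.sum_add_distrib]
  rw [sum4_diag, sum4_pairB, sum4_pairC, sum4_pairD]
  unfold cum4
  have hN4 : (4 : ℝ) ≤ (N : ℝ) := by exact_mod_cast hN
  have hN0 : (N : ℝ) ≠ 0 := by linarith
  have hN1 : (N : ℝ) - 1 ≠ 0 := by linarith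
  field_simp
  ring
end

section
/- There exists a universal constant C > 0 such that for every N ≥ 8 and every zero-mean random vector Z in ℝ^n with finite eighth moments, if z^{(1)}, …, z^{(N)} are i.i.d. copies of Z, then for all indices i, j, k, l, Var(k(z_i, z_j, z_k, z_l)) ≤ C · (max_{q ∈ [n]} E[Z_q^8]) / N. -/
open MeasureTheory ProbabilityTheory Matrix

lemma kphi_of_card1 {N : ℕ} {r s t u : Fin N}
    (h : ({r, s, t, u} : Finset (Fin N)).card = 1) : kphi N r s t u = 1 := by
  unfold kphi; simp only [h]

lemma kphi_of_card2 {N : ℕ} {r s t u : Fin N}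
    (h : ({r, s, t, u} : Finset (Fin N)).card = 2) :
    kphi N r s t u = -1 / ((N : ℝ) - 1) := by
  unfold kphi; simp only [h]

lemma kphi_of_card3 {N : ℕ} {r s t u : Fin N}
    (h : ({r, s, t, u} : Finset (Fin N)).card = 3) :
    kphi N r s t u = 2 / (((N : ℝ) - 1) * ((N : ℝ) - 2)) := by
  unfold kphi; simp only [h]

lemma kphi_of_card4 {N : ℕ} {r s t u : Fin N}
    (h : ({r, s, t, u} : Finset (Fin N)).card = 4) :
    kphi N r s t u = -6 / (((N : ℝ) - 1) * ((N : ℝ) - 2) * ((N : ℝ) - 3)) := by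
  unfold kphi; simp only [h]

-- numeric auxiliary bounds
lemma aux2 {x : ℝ} (hx : 8 ≤ x) : |(-1)/(x-1)| ≤ 16 * (1/x) := by
  have h1 : (0:ℝ) < x - 1 := by linarith
  have h0 : (0:ℝ) < x := by linarith
  rw [abs_div, abs_neg, abs_one, abs_of_pos h1]
  rw [div_le_iff₀ h1]
  have : 16 * (1/x) = 16 / x := by ring
  rw [this, div_mul_eq_mul_div, le_div_iff₀ h0]
  nlinarith

lemma aux3 {x : ℝ} (hx : 8 ≤ x) : |2/((x-1)*(x-2))| ≤ 16 * (1/x) * (1/x) := by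
  have h1 : (0:ℝ) < x - 1 := by linarith
  have h2 : (0:ℝ) < x - 2 := by linarith
  have h0 : (0:ℝ) < x := by linarith
  have hd : (0:ℝ) < (x-1)*(x-2) := mul_pos h1 h2
  rw [abs_div, abs_of_pos hd, abs_of_nonneg (by norm_num : (0:ℝ) ≤ 2)]
  rw [div_le_iff₀ hd]
  have : 16 * (1/x) * (1/x) = 16 / (x*x) := by field_simp
  rw [this, div_mul_eq_mul_div, le_div_iff₀ (by positivity)]
  nlinarith

lemma aux4 {x : ℝ} (hx : 8 ≤ x) :
    |(-6)/((x-1)*(x-2)*(x-3))| ≤ 16 * (1/x) * (1/x) * (1/x) := by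
  have h1 : (0:ℝ) < x - 1 := by linarith
  have h2 : (0:ℝ) < x - 2 := by linarith
  have h3 : (0:ℝ) < x - 3 := by linarith
  have h0 : (0:ℝ) < x := by linarith
  have hd : (0:ℝ) < (x-1)*(x-2)*(x-3) := mul_pos (mul_pos h1 h2) h3
  rw [abs_div, abs_neg, abs_of_pos hd, abs_of_nonneg (by norm_num : (0:ℝ) ≤ 6)]
  rw [div_le_iff₀ hd]
  have : 16 * (1/x) * (1/x) * (1/x) = 16 / (x*x*x) := by field_simp
  rw [this, div_mul_eq_mul_div, le_div_iff₀ (by positivity)]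
  nlinarith [mul_pos h0 h0, sq_nonneg (x-8), mul_pos (mul_pos h0 h0) h0]

lemma kphi_abs_le {N : ℕ} (hN : 8 ≤ N) (r s t u : Fin N) :
    |kphi N r s t u| ≤ 16 * (if s = r then 1 else 1/(N:ℝ))
      * (if t = r ∨ t = s then 1 else 1/(N:ℝ))
      * (if u = r ∨ u = s ∨ u = t then 1 else 1/(N:ℝ)) := by
  have hNx : (8:ℝ) ≤ (N:ℝ) := by exact_mod_cast hN
  by_cases hs : s = r
  · by_cases ht : t = r ∨ t = s
    · have ht' : t = r := by rcases ht with h|h; exact h; rw [h, hs]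
      by_cases hu : u = r ∨ u = s ∨ u = t
      · have hu' : u = r := by rcases hu with h|h|h; exact h; rw [h, hs]; rw [h, ht']
        rw [if_pos hs, if_pos ht, if_pos hu]
        have hset : ({r, s, t, u} : Finset (Fin N)) = {r} := by
          ext x
          simp only [Finset.mem_insert, Finset.mem_singleton, hs, ht', hu', or_self]
        rw [kphi_of_card1 (by rw [hset]; exact Finset.card_singleton r)]
        norm_num
      · have hur : u ≠ r := fun h => hu (Or.inl h)
        rw [if_pos hs, if_pos ht, if_neg hu]
        have hset : ({r, s, t, u} : Finset (Fin N)) = {r, u} := by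
          ext x
          simp only [Finset.mem_insert, Finset.mem_singleton, hs, ht']
          tauto
        rw [kphi_of_card2 (by rw [hset]; exact Finset.card_pair (Ne.symm hur))]
        calc |(-1) / ((N:ℝ)-1)| ≤ 16 * (1/(N:ℝ)) := aux2 hNx
          _ = 16 * 1 * 1 * (1/(N:ℝ)) := by ring
    · have htr : t ≠ r := fun h => ht (Or.inl h)
      by_cases hu : u = r ∨ u = s ∨ u = t
      · have hu' : u = r ∨ u = t := by
          rcases hu with h|h|h
          · exact Or.inl h
          · exact Or.inl (h.trans hs)
          · exact Or.inr h
        rw [if_pos hs, if_neg ht, if_pos hu]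
        have hset : ({r, s, t, u} : Finset (Fin N)) = {r, t} := by
          ext x
          simp only [Finset.mem_insert, Finset.mem_singleton, hs, or_self_left]
          constructor
          · rintro (h|h|h)
            · exact Or.inl h
            · exact Or.inr h
            · rcases hu' with h'|h'
              · exact Or.inl (h.trans h')
              · exact Or.inr (h.trans h')
          · tauto
        rw [kphi_of_card2 (by rw [hset]; exact Finset.card_pair (Ne.symm htr))]
        calc |(-1) / ((N:ℝ)-1)| ≤ 16 * (1/(N:ℝ)) := aux2 hNx
          _ = 16 * 1 * (1/(N:ℝ)) * 1 := by ring
      · have hur : u ≠ r := fun h => hu (Or.inl h)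
        have hut : u ≠ t := fun h => hu (Or.inr (Or.inr h))
        rw [if_pos hs, if_neg ht, if_neg hu]
        have hset : ({r, s, t, u} : Finset (Fin N)) = {r, t, u} := by
          ext x
          simp only [Finset.mem_insert, Finset.mem_singleton, hs, or_self_left]
        have hc : ({r, t, u} : Finset (Fin N)).card = 3 := by
          rw [Finset.card_insert_of_notMem (by
              simp only [Finset.mem_insert, Finset.mem_singleton]
              push_neg
              exact ⟨Ne.symm htr, Ne.symm hur⟩),
            Finset.card_pair (Ne.symm hut)]
        rw [kphi_of_card3 (by rw [hset]; exact hc)]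
        calc |2 / (((N:ℝ)-1)*((N:ℝ)-2))| ≤ 16 * (1/(N:ℝ)) * (1/(N:ℝ)) := aux3 hNx
          _ = 16 * 1 * (1/(N:ℝ)) * (1/(N:ℝ)) := by ring
  · by_cases ht : t = r ∨ t = s
    · by_cases hu : u = r ∨ u = s ∨ u = t
      · rw [if_neg hs, if_pos ht, if_pos hu]
        have hset : ({r, s, t, u} : Finset (Fin N)) = {r, s} := by
          ext x
          simp only [Finset.mem_insert, Finset.mem_singleton]
          constructor
          · rintro (h|h|h|h)
            · exact Or.inl h
            · exact Or.inr h
            · rcases ht with h'|h'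
              · exact Or.inl (h.trans h')
              · exact Or.inr (h.trans h')
            · rcases hu with h'|h'|h'
              · exact Or.inl (h.trans h')
              · exact Or.inr (h.trans h')
              · rcases ht with h''|h''
                · exact Or.inl ((h.trans h').trans h'')
                · exact Or.inr ((h.trans h').trans h'')
          · tauto
        rw [kphi_of_card2 (by rw [hset]; exact Finset.card_pair (Ne.symm hs))]
        calc |(-1) / ((N:ℝ)-1)| ≤ 16 * (1/(N:ℝ)) := aux2 hNx
          _ = 16 * (1/(N:ℝ)) * 1 * 1 := by ring
      · have hur : u ≠ r := fun h => hu (Or.inl h)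
        have hus : u ≠ s := fun h => hu (Or.inr (Or.inl h))
        rw [if_neg hs, if_pos ht, if_neg hu]
        have hset : ({r, s, t, u} : Finset (Fin N)) = {r, s, u} := by
          ext x
          simp only [Finset.mem_insert, Finset.mem_singleton]
          constructor
          · rintro (h|h|h|h)
            · exact Or.inl h
            · exact Or.inr (Or.inl h)
            · rcases ht with h'|h'
              · exact Or.inl (h.trans h')
              · exact Or.inr (Or.inl (h.trans h'))
            · exact Or.inr (Or.inr h)
          · tauto
        have hc : ({r, s, u} : Finset (Fin N)).card = 3 := by
          rw [Finset.card_insert_of_notMem (by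
              simp only [Finset.mem_insert, Finset.mem_singleton]
              push_neg
              exact ⟨Ne.symm hs, Ne.symm hur⟩),
            Finset.card_pair (Ne.symm hus)]
        rw [kphi_of_card3 (by rw [hset]; exact hc)]
        calc |2 / (((N:ℝ)-1)*((N:ℝ)-2))| ≤ 16 * (1/(N:ℝ)) * (1/(N:ℝ)) := aux3 hNx
          _ = 16 * (1/(N:ℝ)) * 1 * (1/(N:ℝ)) := by ring
    · have htr : t ≠ r := fun h => ht (Or.inl h)
      have hts : t ≠ s := fun h => ht (Or.inr h)
      by_cases hu : u = r ∨ u = s ∨ u = t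
      · rw [if_neg hs, if_neg ht, if_pos hu]
        have hset : ({r, s, t, u} : Finset (Fin N)) = {r, s, t} := by
          ext x
          simp only [Finset.mem_insert, Finset.mem_singleton]
          constructor
          · rintro (h|h|h|h)
            · exact Or.inl h
            · exact Or.inr (Or.inl h)
            · exact Or.inr (Or.inr h)
            · rcases hu with h'|h'|h'
              · exact Or.inl (h.trans h')
              · exact Or.inr (Or.inl (h.trans h'))
              · exact Or.inr (Or.inr (h.trans h'))
          · tauto
        have hc : ({r, s, t} : Finset (Fin N)).card = 3 := by
          rw [Finset.card_insert_of_notMem (by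
              simp only [Finset.mem_insert, Finset.mem_singleton]
              push_neg
              exact ⟨Ne.symm hs, Ne.symm htr⟩),
            Finset.card_pair (Ne.symm hts)]
        rw [kphi_of_card3 (by rw [hset]; exact hc)]
        calc |2 / (((N:ℝ)-1)*((N:ℝ)-2))| ≤ 16 * (1/(N:ℝ)) * (1/(N:ℝ)) := aux3 hNx
          _ = 16 * (1/(N:ℝ)) * (1/(N:ℝ)) * 1 := by ring
      · have hur : u ≠ r := fun h => hu (Or.inl h)
        have hus : u ≠ s := fun h => hu (Or.inr (Or.inl h))
        have hut : u ≠ t := fun h => hu (Or.inr (Or.inr h))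
        rw [if_neg hs, if_neg ht, if_neg hu]
        have hc : ({r, s, t, u} : Finset (Fin N)).card = 4 := by
          rw [Finset.card_insert_of_notMem (by
              simp only [Finset.mem_insert, Finset.mem_singleton]
              push_neg
              exact ⟨Ne.symm hs, Ne.symm htr, Ne.symm hur⟩),
            Finset.card_insert_of_notMem (by
              simp only [Finset.mem_insert, Finset.mem_singleton]
              push_neg
              exact ⟨Ne.symm hts, Ne.symm hus⟩),
            Finset.card_pair (Ne.symm hut)]
        rw [kphi_of_card4 hc]
        exact aux4 hNx

-- indicator sum bounds
lemma sum_if_le3 {N : ℕ} (a b c : Fin N) :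
    ∑ u : Fin N, (if u = a ∨ u = b ∨ u = c then (1:ℝ) else 1/(N:ℕ)) ≤ 4 := by
  have hpt : ∀ u : Fin N, (if u = a ∨ u = b ∨ u = c then (1:ℝ) else 1/(N:ℕ))
      ≤ (if u = a then (1:ℝ) else 0) + (if u = b then (1:ℝ) else 0)
        + (if u = c then (1:ℝ) else 0) + 1/(N:ℕ) := by
    intro u
    split_ifs <;> simp_all <;>
      (have h0 : (0:ℝ) ≤ ((N:ℕ):ℝ)⁻¹ := by positivity) <;> linarith
  calc ∑ u : Fin N, (if u = a ∨ u = b ∨ u = c then (1:ℝ) else 1/(N:ℕ))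
      ≤ ∑ u : Fin N, ((if u = a then (1:ℝ) else 0) + (if u = b then (1:ℝ) else 0)
        + (if u = c then (1:ℝ) else 0) + 1/(N:ℕ)) := Finset.sum_le_sum fun u _ => hpt u
    _ ≤ 4 := by
      rcases Nat.eq_zero_or_pos N with h|h
      · subst h; simp
      have hN0 : ((N:ℕ):ℝ) ≠ 0 := by positivity
      simp only [Finset.sum_add_distrib, Finset.sum_ite_eq', Finset.mem_univ, if_true,
        Finset.sum_const, Finset.card_univ, Fintype.card_fin, nsmul_eq_mul]
      rw [mul_one_div, div_self hN0]
      norm_num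

lemma sum_if_le1 {N : ℕ} (a : Fin N) :
    ∑ u : Fin N, (if u = a then (1:ℝ) else 1/(N:ℕ)) ≤ 2 := by
  have hpt : ∀ u : Fin N, (if u = a then (1:ℝ) else 1/(N:ℕ))
      ≤ (if u = a then (1:ℝ) else 0) + 1/(N:ℕ) := by
    intro u
    split_ifs <;> simp_all <;>
      (have h0 : (0:ℝ) ≤ ((N:ℕ):ℝ)⁻¹ := by positivity) <;> linarith
  calc ∑ u : Fin N, (if u = a then (1:ℝ) else 1/(N:ℕ))
      ≤ ∑ u : Fin N, ((if u = a then (1:ℝ) else 0) + 1/(N:ℕ)) :=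
        Finset.sum_le_sum fun u _ => hpt u
    _ ≤ 2 := by
      rcases Nat.eq_zero_or_pos N with h|h
      · subst h; simp
      have hN0 : ((N:ℕ):ℝ) ≠ 0 := by positivity
      simp only [Finset.sum_add_distrib, Finset.sum_ite_eq', Finset.mem_univ, if_true,
        Finset.sum_const, Finset.card_univ, Fintype.card_fin, nsmul_eq_mul]
      rw [mul_one_div, div_self hN0]
      norm_num

lemma sum_if_le2 {N : ℕ} (a b : Fin N) :
    ∑ u : Fin N, (if u = a ∨ u = b then (1:ℝ) else 1/(N:ℕ)) ≤ 3 := by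
  have hpt : ∀ u : Fin N, (if u = a ∨ u = b then (1:ℝ) else 1/(N:ℕ))
      ≤ (if u = a then (1:ℝ) else 0) + (if u = b then (1:ℝ) else 0) + 1/(N:ℕ) := by
    intro u
    split_ifs <;> simp_all <;>
      (have h0 : (0:ℝ) ≤ ((N:ℕ):ℝ)⁻¹ := by positivity) <;> linarith
  calc ∑ u : Fin N, (if u = a ∨ u = b then (1:ℝ) else 1/(N:ℕ))
      ≤ ∑ u : Fin N, ((if u = a then (1:ℝ) else 0) + (if u = b then (1:ℝ) else 0)
          + 1/(N:ℕ)) := Finset.sum_le_sum fun u _ => hpt u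
    _ ≤ 3 := by
      rcases Nat.eq_zero_or_pos N with h|h
      · subst h; simp
      have hN0 : ((N:ℕ):ℝ) ≠ 0 := by positivity
      simp only [Finset.sum_add_distrib, Finset.sum_ite_eq', Finset.mem_univ, if_true,
        Finset.sum_const, Finset.card_univ, Fintype.card_fin, nsmul_eq_mul]
      rw [mul_one_div, div_self hN0]
      norm_num

lemma if_nonneg' {N : ℕ} (P : Prop) [Decidable P] :
    (0:ℝ) ≤ if P then 1 else 1/(N:ℕ) := by
  split_ifs
  · norm_num
  · positivity

lemma A1_le {N : ℕ} (hN : 8 ≤ N) (x : Fin N) :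
    ∑ s, ∑ t, ∑ u, |kphi N x s t u| ≤ 384 := by
  calc ∑ s, ∑ t, ∑ u, |kphi N x s t u|
      ≤ ∑ s, ∑ t, ∑ u, 16 * (if s = x then (1:ℝ) else 1/(N:ℕ))
          * (if t = x ∨ t = s then (1:ℝ) else 1/(N:ℕ))
          * (if u = x ∨ u = s ∨ u = t then (1:ℝ) else 1/(N:ℕ)) :=
        Finset.sum_le_sum fun s _ => Finset.sum_le_sum fun t _ =>
          Finset.sum_le_sum fun u _ => by
            simpa using kphi_abs_le hN x s t u
    _ = ∑ s, ∑ t, (16 * (if s = x then (1:ℝ) else 1/(N:ℕ))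
          * (if t = x ∨ t = s then (1:ℝ) else 1/(N:ℕ)))
          * ∑ u, (if u = x ∨ u = s ∨ u = t then (1:ℝ) else 1/(N:ℕ)) := by
        refine Finset.sum_congr rfl fun s _ => Finset.sum_congr rfl fun t _ => ?_
        rw [Finset.mul_sum]
    _ ≤ ∑ s, ∑ t, (16 * (if s = x then (1:ℝ) else 1/(N:ℕ))
          * (if t = x ∨ t = s then (1:ℝ) else 1/(N:ℕ))) * 4 :=
        Finset.sum_le_sum fun s _ => Finset.sum_le_sum fun t _ =>
          mul_le_mul_of_nonneg_left (sum_if_le3 x s t)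
            (by have := if_nonneg' (N := N) (s = x); have := if_nonneg' (N := N) (t = x ∨ t = s); positivity)
    _ = ∑ s, (64 * (if s = x then (1:ℝ) else 1/(N:ℕ)))
          * ∑ t, (if t = x ∨ t = s then (1:ℝ) else 1/(N:ℕ)) := by
        refine Finset.sum_congr rfl fun s _ => ?_
        rw [Finset.mul_sum]
        exact Finset.sum_congr rfl fun t _ => by ring
    _ ≤ ∑ s, (64 * (if s = x then (1:ℝ) else 1/(N:ℕ))) * 3 :=
        Finset.sum_le_sum fun s _ =>
          mul_le_mul_of_nonneg_left (sum_if_le2 x s)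
            (by have := if_nonneg' (N := N) (s = x); positivity)
    _ = 192 * ∑ s, (if s = x then (1:ℝ) else 1/(N:ℕ)) := by
        rw [Finset.mul_sum]
        exact Finset.sum_congr rfl fun s _ => by ring
    _ ≤ 192 * 2 := by
        have := sum_if_le1 x
        nlinarith [sum_if_le1 x]
    _ = 384 := by norm_num

lemma kphi_swap12 {N : ℕ} (r s t u : Fin N) : kphi N r s t u = kphi N s r t u := by
  unfold kphi
  rw [show ({r,s,t,u} : Finset (Fin N)) = {s,r,t,u} from by
    ext x; simp only [Finset.mem_insert, Finset.mem_singleton]; tauto]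

lemma kphi_perm13 {N : ℕ} (r s t u : Fin N) : kphi N r s t u = kphi N t s r u := by
  unfold kphi
  rw [show ({r,s,t,u} : Finset (Fin N)) = {t,s,r,u} from by
    ext x; simp only [Finset.mem_insert, Finset.mem_singleton]; tauto]

lemma kphi_perm14 {N : ℕ} (r s t u : Fin N) : kphi N r s t u = kphi N u s t r := by
  unfold kphi
  rw [show ({r,s,t,u} : Finset (Fin N)) = {u,s,t,r} from by
    ext x; simp only [Finset.mem_insert, Finset.mem_singleton]; tauto]

lemma marg2_le {N : ℕ} (hN : 8 ≤ N) (v : Fin N) :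
    ∑ a, ∑ c, ∑ d, |kphi N a v c d| ≤ 384 := by
  calc ∑ a, ∑ c, ∑ d, |kphi N a v c d| = ∑ a, ∑ c, ∑ d, |kphi N v a c d| := by
        refine Finset.sum_congr rfl fun a _ => Finset.sum_congr rfl fun c _ =>
          Finset.sum_congr rfl fun d _ => by rw [kphi_swap12]
    _ ≤ 384 := A1_le hN v

lemma marg3_le {N : ℕ} (hN : 8 ≤ N) (v : Fin N) :
    ∑ a, ∑ b, ∑ d, |kphi N a b v d| ≤ 384 := by
  calc ∑ a, ∑ b, ∑ d, |kphi N a b v d| = ∑ a, ∑ b, ∑ d, |kphi N v b a d| := by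
        refine Finset.sum_congr rfl fun a _ => Finset.sum_congr rfl fun b _ =>
          Finset.sum_congr rfl fun d _ => by rw [kphi_perm13]
    _ = ∑ b, ∑ a, ∑ d, |kphi N v b a d| := Finset.sum_comm
    _ ≤ 384 := A1_le hN v

lemma marg4_le {N : ℕ} (hN : 8 ≤ N) (v : Fin N) :
    ∑ a, ∑ b, ∑ c, |kphi N a b c v| ≤ 384 := by
  calc ∑ a, ∑ b, ∑ c, |kphi N a b c v| = ∑ a, ∑ b, ∑ c, |kphi N v b c a| := by
        refine Finset.sum_congr rfl fun a _ => Finset.sum_congr rfl fun b _ =>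
          Finset.sum_congr rfl fun c _ => by rw [kphi_perm14]
    _ = ∑ b, ∑ a, ∑ c, |kphi N v b c a| := Finset.sum_comm
    _ = ∑ b, ∑ c, ∑ a, |kphi N v b c a| :=
        Finset.sum_congr rfl fun b _ => Finset.sum_comm
    _ ≤ 384 := A1_le hN v

lemma sum_mul_ind {N : ℕ} (g : Fin N → ℝ) (v : Fin N) :
    ∑ a, g a * (if a = v then (1:ℝ) else 0) = g v := by
  have : ∀ a : Fin N, g a * (if a = v then (1:ℝ) else 0)
      = if a = v then g a else 0 := by
    intro a; split_ifs <;> ring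
  simp only [this, Finset.sum_ite_eq', Finset.mem_univ, if_true]

lemma slot1_le {N : ℕ} (hN : 8 ≤ N) (v : Fin N) :
    ∑ a, ∑ b, ∑ c, ∑ d, |kphi N a b c d| * (if a = v then (1:ℝ) else 0) ≤ 384 := by
  calc ∑ a, ∑ b, ∑ c, ∑ d, |kphi N a b c d| * (if a = v then (1:ℝ) else 0)
      = ∑ a, (∑ b, ∑ c, ∑ d, |kphi N a b c d|) * (if a = v then (1:ℝ) else 0) := by
        refine Finset.sum_congr rfl fun a _ => ?_
        simp only [← Finset.sum_mul]
    _ = ∑ b, ∑ c, ∑ d, |kphi N v b c d| := sum_mul_ind _ v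
    _ ≤ 384 := A1_le hN v

lemma slot2_le {N : ℕ} (hN : 8 ≤ N) (v : Fin N) :
    ∑ a, ∑ b, ∑ c, ∑ d, |kphi N a b c d| * (if b = v then (1:ℝ) else 0) ≤ 384 := by
  calc ∑ a, ∑ b, ∑ c, ∑ d, |kphi N a b c d| * (if b = v then (1:ℝ) else 0)
      = ∑ a, ∑ b, (∑ c, ∑ d, |kphi N a b c d|) * (if b = v then (1:ℝ) else 0) := by
        refine Finset.sum_congr rfl fun a _ => Finset.sum_congr rfl fun b _ => ?_
        simp only [← Finset.sum_mul]
    _ = ∑ a, ∑ c, ∑ d, |kphi N a v c d| :=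
        Finset.sum_congr rfl fun a _ => sum_mul_ind _ v
    _ ≤ 384 := marg2_le hN v

lemma slot3_le {N : ℕ} (hN : 8 ≤ N) (v : Fin N) :
    ∑ a, ∑ b, ∑ c, ∑ d, |kphi N a b c d| * (if c = v then (1:ℝ) else 0) ≤ 384 := by
  calc ∑ a, ∑ b, ∑ c, ∑ d, |kphi N a b c d| * (if c = v then (1:ℝ) else 0)
      = ∑ a, ∑ b, ∑ c, (∑ d, |kphi N a b c d|) * (if c = v then (1:ℝ) else 0) := by
        refine Finset.sum_congr rfl fun a _ => Finset.sum_congr rfl fun b _ =>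
          Finset.sum_congr rfl fun c _ => ?_
        simp only [← Finset.sum_mul]
    _ = ∑ a, ∑ b, ∑ d, |kphi N a b v d| :=
        Finset.sum_congr rfl fun a _ => Finset.sum_congr rfl fun b _ => sum_mul_ind _ v
    _ ≤ 384 := marg3_le hN v

lemma slot4_le {N : ℕ} (hN : 8 ≤ N) (v : Fin N) :
    ∑ a, ∑ b, ∑ c, ∑ d, |kphi N a b c d| * (if d = v then (1:ℝ) else 0) ≤ 384 := by
  calc ∑ a, ∑ b, ∑ c, ∑ d, |kphi N a b c d| * (if d = v then (1:ℝ) else 0)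
      = ∑ a, ∑ b, ∑ c, |kphi N a b c v| :=
        Finset.sum_congr rfl fun a _ => Finset.sum_congr rfl fun b _ =>
          Finset.sum_congr rfl fun c _ => sum_mul_ind _ v
    _ ≤ 384 := marg4_le hN v

noncomputable def kW {N : ℕ} (p : Fin N × Fin N × Fin N × Fin N) : ℝ :=
  |kphi N p.1 p.2.1 p.2.2.1 p.2.2.2|

def kS {N : ℕ} (p : Fin N × Fin N × Fin N × Fin N) : Finset (Fin N) :=
  {p.1, p.2.1, p.2.2.1, p.2.2.2}

noncomputable def kE {N : ℕ} (p q : Fin N × Fin N × Fin N × Fin N) : ℝ :=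
  if Disjoint (kS p) (kS q) then 0 else 1

def slk {N : ℕ} (p : Fin N × Fin N × Fin N × Fin N) : Fin 4 → Fin N :=
  ![p.1, p.2.1, p.2.2.1, p.2.2.2]

lemma kW_nonneg {N : ℕ} (p : Fin N × Fin N × Fin N × Fin N) : 0 ≤ kW p := abs_nonneg _

lemma kE_nonneg {N : ℕ} (p q : Fin N × Fin N × Fin N × Fin N) : 0 ≤ kE p q := by
  unfold kE; split_ifs <;> norm_num

lemma sum_kW_le {N : ℕ} (hN : 8 ≤ N) :
    ∑ p : Fin N × Fin N × Fin N × Fin N, kW p ≤ 384 * N := by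
  rw [Fintype.sum_prod_type]
  simp only [Fintype.sum_prod_type]
  calc ∑ a : Fin N, ∑ b : Fin N, ∑ c : Fin N, ∑ d : Fin N, kW (a, b, c, d)
      ≤ ∑ _a : Fin N, (384:ℝ) := Finset.sum_le_sum fun a _ => A1_le hN a
    _ = 384 * N := by
        simp [Finset.sum_const, Finset.card_univ, mul_comm]

lemma sum_kW_ind_le {N : ℕ} (hN : 8 ≤ N) (m : Fin 4) (v : Fin N) :
    ∑ q : Fin N × Fin N × Fin N × Fin N, kW q * (if slk q m = v then (1:ℝ) else 0)
      ≤ 384 := by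
  fin_cases m
  · simp only [Fintype.sum_prod_type, kW, slk]
    exact slot1_le hN v
  · simp only [Fintype.sum_prod_type, kW, slk]
    exact slot2_le hN v
  · simp only [Fintype.sum_prod_type, kW, slk]
    exact slot3_le hN v
  · simp only [Fintype.sum_prod_type, kW, slk]
    exact slot4_le hN v

lemma kE_le_sum_ind {N : ℕ} (p q : Fin N × Fin N × Fin N × Fin N) :
    kE p q ≤ ∑ mm : Fin 4 × Fin 4, (if slk q mm.2 = slk p mm.1 then (1:ℝ) else 0) := by
  by_cases hd : Disjoint (kS p) (kS q)
  · rw [kE, if_pos hd]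
    exact Finset.sum_nonneg fun mm _ => by split_ifs <;> norm_num
  · rw [kE, if_neg hd]
    obtain ⟨x, hx1, hx2⟩ := Finset.not_disjoint_iff.mp hd
    have h1 : ∃ m : Fin 4, slk p m = x := by
      simp only [kS, Finset.mem_insert, Finset.mem_singleton] at hx1
      rcases hx1 with h|h|h|h
      · exact ⟨0, by simp [slk, h.symm]⟩
      · exact ⟨1, by simp [slk, h.symm]⟩
      · exact ⟨2, by simp [slk, h.symm]⟩
      · exact ⟨3, by simp [slk, h.symm]⟩
    have h2 : ∃ m : Fin 4, slk q m = x := by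
      simp only [kS, Finset.mem_insert, Finset.mem_singleton] at hx2
      rcases hx2 with h|h|h|h
      · exact ⟨0, by simp [slk, h.symm]⟩
      · exact ⟨1, by simp [slk, h.symm]⟩
      · exact ⟨2, by simp [slk, h.symm]⟩
      · exact ⟨3, by simp [slk, h.symm]⟩
    obtain ⟨m1, hm1⟩ := h1
    obtain ⟨m2, hm2⟩ := h2
    have hterm : (if slk q (m1, m2).2 = slk p (m1, m2).1 then (1:ℝ) else 0) = 1 := by
      rw [if_pos]; rw [hm1, hm2]
    calc (1:ℝ) = (if slk q (m1, m2).2 = slk p (m1, m2).1 then (1:ℝ) else 0) := hterm.symm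
      _ ≤ ∑ mm : Fin 4 × Fin 4, (if slk q mm.2 = slk p mm.1 then (1:ℝ) else 0) :=
        Finset.single_le_sum
          (f := fun mm : Fin 4 × Fin 4 => if slk q mm.2 = slk p mm.1 then (1:ℝ) else 0)
          (fun mm _ => by split_ifs <;> norm_num) (Finset.mem_univ (m1, m2))

lemma master_sum {N : ℕ} (hN : 8 ≤ N) :
    ∑ p : Fin N × Fin N × Fin N × Fin N, ∑ q : Fin N × Fin N × Fin N × Fin N,
      kW p * kW q * kE p q ≤ 2359296 * N := by
  calc ∑ p : Fin N × Fin N × Fin N × Fin N, ∑ q : Fin N × Fin N × Fin N × Fin N,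
        kW p * kW q * kE p q
      ≤ ∑ p : Fin N × Fin N × Fin N × Fin N, ∑ q : Fin N × Fin N × Fin N × Fin N,
          ∑ mm : Fin 4 × Fin 4, kW p * (kW q * (if slk q mm.2 = slk p mm.1 then (1:ℝ) else 0)) := by
        refine Finset.sum_le_sum fun p _ => Finset.sum_le_sum fun q _ => ?_
        calc kW p * kW q * kE p q
            ≤ kW p * kW q * ∑ mm : Fin 4 × Fin 4,
                (if slk q mm.2 = slk p mm.1 then (1:ℝ) else 0) :=
              mul_le_mul_of_nonneg_left (kE_le_sum_ind p q)
                (mul_nonneg (kW_nonneg p) (kW_nonneg q))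
          _ = ∑ mm : Fin 4 × Fin 4, kW p * (kW q
                * (if slk q mm.2 = slk p mm.1 then (1:ℝ) else 0)) := by
              rw [Finset.mul_sum]
              exact Finset.sum_congr rfl fun mm _ => by ring
    _ = ∑ p : Fin N × Fin N × Fin N × Fin N, ∑ mm : Fin 4 × Fin 4,
          ∑ q : Fin N × Fin N × Fin N × Fin N,
            kW p * (kW q * (if slk q mm.2 = slk p mm.1 then (1:ℝ) else 0)) :=
        Finset.sum_congr rfl fun p _ => Finset.sum_comm
    _ = ∑ p : Fin N × Fin N × Fin N × Fin N, ∑ mm : Fin 4 × Fin 4,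
          kW p * ∑ q : Fin N × Fin N × Fin N × Fin N,
            kW q * (if slk q mm.2 = slk p mm.1 then (1:ℝ) else 0) :=
        Finset.sum_congr rfl fun p _ => Finset.sum_congr rfl fun mm _ =>
          (Finset.mul_sum _ _ _).symm
    _ ≤ ∑ p : Fin N × Fin N × Fin N × Fin N, ∑ _mm : Fin 4 × Fin 4, kW p * 384 :=
        Finset.sum_le_sum fun p _ => Finset.sum_le_sum fun mm _ =>
          mul_le_mul_of_nonneg_left (sum_kW_ind_le hN mm.2 (slk p mm.1)) (kW_nonneg p)
    _ = ∑ p : Fin N × Fin N × Fin N × Fin N, kW p * 6144 := by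
        refine Finset.sum_congr rfl fun p _ => ?_
        rw [Finset.sum_const]
        simp
        ring
    _ = (∑ p : Fin N × Fin N × Fin N × Fin N, kW p) * 6144 := by
        rw [← Finset.sum_mul]
    _ ≤ (384 * N) * 6144 :=
        mul_le_mul_of_nonneg_right (sum_kW_le hN) (by norm_num)
    _ = 2359296 * N := by ring

-- AM-GM pointwise lemmas
lemma abs4le (a b c d : ℝ) : |a*b*c*d| ≤ (a^4+b^4+c^4+d^4)/4 := by
  have h1 : |a*b*c*d| = |a*b| * |c*d| := by rw [mul_assoc, abs_mul]
  have h2 : 2 * |a*b| * |c*d| ≤ (a*b)^2 + (c*d)^2 := by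
    have := two_mul_le_add_sq |a*b| |c*d|
    simpa only [sq_abs] using this
  have h3 : 2*(a*b)^2 ≤ a^4 + b^4 := by nlinarith [sq_nonneg (a^2-b^2)]
  have h4 : 2*(c*d)^2 ≤ c^4 + d^4 := by nlinarith [sq_nonneg (c^2-d^2)]
  nlinarith [abs_nonneg (a*b), abs_nonneg (c*d)]

lemma abs8le (a b c d e f g h : ℝ) :
    |(a*b*c*d)*(e*f*g*h)| ≤ (a^8+b^8+c^8+d^8+e^8+f^8+g^8+h^8)/8 := by
  have h1 : |(a*b*c*d)*(e*f*g*h)| = |a*b*c*d| * |e*f*g*h| := abs_mul _ _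
  have h2 : 2 * |a*b*c*d| * |e*f*g*h| ≤ (a*b*c*d)^2 + (e*f*g*h)^2 := by
    have := two_mul_le_add_sq |a*b*c*d| |e*f*g*h|
    simpa only [sq_abs] using this
  have h3 : (a*b*c*d)^2 ≤ (a^8+b^8+c^8+d^8)/4 := by
    have := abs4le (a^2) (b^2) (c^2) (d^2)
    have e1 : |a^2*b^2*c^2*d^2| = (a*b*c*d)^2 := by
      rw [abs_of_nonneg (by positivity)]; ring
    rw [e1] at this; calc (a*b*c*d)^2 ≤ (( a^2)^4+(b^2)^4+(c^2)^4+(d^2)^4)/4 := this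
      _ = (a^8+b^8+c^8+d^8)/4 := by ring
  have h4 : (e*f*g*h)^2 ≤ (e^8+f^8+g^8+h^8)/4 := by
    have := abs4le (e^2) (f^2) (g^2) (h^2)
    have e1 : |e^2*f^2*g^2*h^2| = (e*f*g*h)^2 := by
      rw [abs_of_nonneg (by positivity)]; ring
    rw [e1] at this; calc (e*f*g*h)^2 ≤ ((e^2)^4+(f^2)^4+(g^2)^4+(h^2)^4)/4 := this
      _ = (e^8+f^8+g^8+h^8)/4 := by ring
  nlinarith [abs_nonneg (a*b*c*d), abs_nonneg (e*f*g*h)]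

lemma variance_sum_expand {Ω : Type} [MeasurableSpace Ω] (μ : Measure Ω) [IsProbabilityMeasure μ]
    {ι : Type*} [Fintype ι] (d : ℝ) (c : ι → ℝ) (Y : ι → Ω → ℝ)
    (hY2 : ∀ t, MemLp (Y t) 2 μ)
    (hYY : ∀ t t', Integrable (fun ω => Y t ω * Y t' ω) μ) :
    variance (fun ω => d * ∑ t, c t * Y t ω) μ
      = d ^ 2 * ∑ t, ∑ t', (c t * c t') *
          ((∫ ω, Y t ω * Y t' ω ∂μ) - (∫ ω, Y t ω ∂μ) * (∫ ω, Y t' ω ∂μ)) := by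
  have hY1 : ∀ t, Integrable (Y t) μ := fun t => (hY2 t).integrable one_le_two
  have hX2 : MemLp (fun ω => d * ∑ t, c t * Y t ω) 2 μ := by
    have h := memLp_finsetSum' (μ := μ) (p := 2) Finset.univ
      (f := fun t ω => c t * Y t ω) (fun t _ => ((hY2 t).const_mul (c t)))
    simpa [Finset.sum_apply] using h.const_mul d
  rw [variance_eq_sub hX2]
  have hsq : ∀ ω : Ω, ((fun ω => d * ∑ t, c t * Y t ω) ^ 2) ω
      = ∑ t, ∑ t', (d^2 * (c t * c t')) * (Y t ω * Y t' ω) := by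
    intro ω
    simp only [Pi.pow_apply]
    rw [mul_pow, sq (∑ t, c t * Y t ω), Finset.sum_mul_sum, Finset.mul_sum]
    refine Finset.sum_congr rfl fun t _ => ?_
    rw [Finset.mul_sum]
    exact Finset.sum_congr rfl fun t' _ => by ring
  have hEX2 : ∫ ω, ((fun ω => d * ∑ t, c t * Y t ω) ^ 2) ω ∂μ
      = ∑ t, ∑ t', (d^2 * (c t * c t')) * ∫ ω, Y t ω * Y t' ω ∂μ := by
    rw [integral_congr_ae (Filter.Eventually.of_forall hsq)]
    rw [integral_finset_sum _ (fun t _ => integrable_finset_sum _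
      (fun t' _ => ((hYY t t').const_mul _)))]
    refine Finset.sum_congr rfl fun t _ => ?_
    rw [integral_finset_sum _ (fun t' _ => ((hYY t t').const_mul _))]
    exact Finset.sum_congr rfl fun t' _ => integral_const_mul _ _
  have hEX : ∫ ω, d * ∑ t, c t * Y t ω ∂μ = d * ∑ t, c t * ∫ ω, Y t ω ∂μ := by
    rw [integral_const_mul, integral_finset_sum _ (fun t _ => (hY1 t).const_mul _)]
    congr 1
    exact Finset.sum_congr rfl fun t _ => integral_const_mul _ _
  calc (∫ ω, ((fun ω => d * ∑ t, c t * Y t ω) ^ 2) ω ∂μ)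
        - (∫ ω, d * ∑ t, c t * Y t ω ∂μ) ^ 2
      = (∑ t, ∑ t', (d^2 * (c t * c t')) * ∫ ω, Y t ω * Y t' ω ∂μ)
        - (d * ∑ t, c t * ∫ ω, Y t ω ∂μ)^2 := by rw [hEX2, hEX]
    _ = d ^ 2 * ∑ t, ∑ t', (c t * c t') *
          ((∫ ω, Y t ω * Y t' ω ∂μ) - (∫ ω, Y t ω ∂μ) * (∫ ω, Y t' ω ∂μ)) := by
        rw [mul_pow, sq (∑ t, c t * ∫ ω, Y t ω ∂μ), Finset.sum_mul_sum]
        rw [Finset.mul_sum, ← Finset.sum_sub_distrib, Finset.mul_sum]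
        refine Finset.sum_congr rfl fun t _ => ?_
        rw [Finset.mul_sum, ← Finset.sum_sub_distrib, Finset.mul_sum]
        refine Finset.sum_congr rfl fun t' _ => by ring

lemma moment_transfer {Ω : Type} [MeasurableSpace Ω] (μ : Measure Ω) {n : ℕ}
    (Z W : Ω → Fin n → ℝ) (hZ : Measurable Z) (hW : Measurable W)
    (hmap : Measure.map W μ = Measure.map Z μ) (q : Fin n) (m : ℕ) :
    ∫ ω, (W ω q)^m ∂μ = ∫ ω, (Z ω q)^m ∂μ := by
  have hg : Measurable (fun w : Fin n → ℝ => (w q)^m) :=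
    (measurable_pi_apply q).pow_const m
  rw [← integral_map hW.aemeasurable hg.aestronglyMeasurable, hmap,
    integral_map hZ.aemeasurable hg.aestronglyMeasurable]

lemma memLp_transfer {Ω : Type} [MeasurableSpace Ω] (μ : Measure Ω) {n : ℕ}
    (Z W : Ω → Fin n → ℝ) (hZ : Measurable Z) (hW : Measurable W)
    (hmap : Measure.map W μ = Measure.map Z μ) (q : Fin n) (p : ENNReal)
    (h : MemLp (fun ω => Z ω q) p μ) : MemLp (fun ω => W ω q) p μ := by
  have hev : Measurable (fun w : Fin n → ℝ => w q) := measurable_pi_apply q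
  have hA : MemLp (fun w : Fin n → ℝ => w q) p (Measure.map Z μ) :=
    (memLp_map_measure_iff hev.aestronglyMeasurable hZ.aemeasurable).mpr h
  have hB : MemLp (fun w : Fin n → ℝ => w q) p (Measure.map W μ) := by
    rw [hmap]; exact hA
  exact (memLp_map_measure_iff hev.aestronglyMeasurable hW.aemeasurable).mp hB

lemma integrable_pow8 {Ω : Type} [MeasurableSpace Ω] {μ : Measure Ω} {f : Ω → ℝ}
    (h : MemLp f 8 μ) : Integrable (fun ω => (f ω)^8) μ := by
  have h8 := h.integrable_norm_rpow (by norm_num) (by norm_num)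
  refine h8.congr (Filter.Eventually.of_forall fun ω => ?_)
  have h1 : ((8:ENNReal)).toReal = ((8:ℕ):ℝ) := by norm_num
  show ‖f ω‖ ^ ((8:ENNReal)).toReal = f ω ^ 8
  rw [h1, Real.rpow_natCast, Real.norm_eq_abs, pow_abs,
    abs_of_nonneg (by positivity : (0:ℝ) ≤ f ω ^ 8)]

lemma integrable_pow4 {Ω : Type} [MeasurableSpace Ω] {μ : Measure Ω}
    [IsProbabilityMeasure μ] {f : Ω → ℝ}
    (h : MemLp f 8 μ) : Integrable (fun ω => (f ω)^4) μ := by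
  have h4 : MemLp f 4 μ := h.mono_exponent (by norm_num)
  have h4' := h4.integrable_norm_rpow (by norm_num) (by norm_num)
  refine h4'.congr (Filter.Eventually.of_forall fun ω => ?_)
  have h1 : ((4:ENNReal)).toReal = ((4:ℕ):ℝ) := by norm_num
  show ‖f ω‖ ^ ((4:ENNReal)).toReal = f ω ^ 4
  rw [h1, Real.rpow_natCast, Real.norm_eq_abs, pow_abs,
    abs_of_nonneg (by positivity : (0:ℝ) ≤ f ω ^ 4)]

lemma sq_integral_pow4_le {Ω : Type} [MeasurableSpace Ω] {μ : Measure Ω}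
    [IsProbabilityMeasure μ] {f : Ω → ℝ} (hm : Measurable f)
    (h : MemLp f 8 μ) : (∫ ω, (f ω)^4 ∂μ)^2 ≤ ∫ ω, (f ω)^8 ∂μ := by
  have hmem2 : MemLp (fun ω => (f ω)^4) 2 μ := by
    refine (memLp_two_iff_integrable_sq ((hm.pow_const 4).aestronglyMeasurable)).mpr ?_
    refine (integrable_pow8 h).congr (Filter.Eventually.of_forall fun ω => ?_)
    ring
  have hvar := variance_nonneg (fun ω => (f ω)^4) μ
  rw [variance_eq_sub hmem2] at hvar
  have h1 : μ[(fun ω => (f ω)^4) ^ 2] = ∫ ω, (f ω)^8 ∂μ := by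
    refine integral_congr_ae (Filter.Eventually.of_forall fun ω => ?_)
    simp only [Pi.pow_apply]; ring
  have h2 : μ[fun ω => (f ω)^4] = ∫ ω, (f ω)^4 ∂μ := rfl
  rw [h1, h2] at hvar
  linarith


set_option maxHeartbeats 1000000 in
/-- there is a universal constant $C > 0$ such that for any
i.i.d. sample of size $N ≥ 8$ of a zero-mean random vector $Z$ with finite
eighth moments, the variance of each entry of the fourth k-statistic tensor
is at most $C ⋅ \max_q E[Z_q^8] / N$. -/
theorem kstat_variance_bound :
    ∃ C : ℝ, 0 < C ∧
      ∀ {Ω : Type} [MeasurableSpace Ω] (μ : Measure Ω) [IsProbabilityMeasure μ]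
        {n N : ℕ}, 8 ≤ N →
        ∀ (Z : Ω → Fin n → ℝ), Measurable Z →
        (∀ q, MemLp (fun ω => Z ω q) 8 μ) →
        (∀ q, ∫ ω, Z ω q ∂μ = 0) →
        ∀ (z : Fin N → Ω → Fin n → ℝ), (∀ r, Measurable (z r)) →
        (∀ r, Measure.map (z r) μ = Measure.map Z μ) →
        iIndepFun z μ →
        ∀ i j k l : Fin n,
          variance (fun ω => kstat (fun r => z r ω i) (fun r => z r ω j)
              (fun r => z r ω k) (fun r => z r ω l)) μ
            ≤ C * (⨆ q : Fin n, ∫ ω, (Z ω q) ^ 8 ∂μ) / N := by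
  refine ⟨4718592, by norm_num, ?_⟩
  intro Ω _mΩ μ _pμ n N hN Z hZm hZ8 _hZmean z hzm hzmap hind i j k l
  have hNpos : 0 < N := by omega
  have hNR : (0:ℝ) < (N:ℝ) := by exact_mod_cast hNpos
  have hx : ∀ (r : Fin N) (q : Fin n), Measurable (fun ω => z r ω q) :=
    fun r q => (measurable_pi_apply q).comp (hzm r)
  have hmem8 : ∀ (r : Fin N) (q : Fin n), MemLp (fun ω => z r ω q) 8 μ :=
    fun r q => memLp_transfer μ Z (z r) hZm (hzm r) (hzmap r) q 8 (hZ8 q)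
  have hint8 : ∀ (r : Fin N) (q : Fin n), Integrable (fun ω => (z r ω q)^8) μ :=
    fun r q => integrable_pow8 (hmem8 r q)
  have hint4 : ∀ (r : Fin N) (q : Fin n), Integrable (fun ω => (z r ω q)^4) μ :=
    fun r q => integrable_pow4 (hmem8 r q)
  set M := ⨆ q : Fin n, ∫ ω, (Z ω q) ^ 8 ∂μ with hM
  set A : Fin n → ℝ := fun q => ∫ ω, (Z ω q)^4 ∂μ with hA
  have hBle : ∀ q, ∫ ω, (Z ω q)^8 ∂μ ≤ M := fun q => by
    rw [hM]
    exact le_ciSup (Set.finite_range fun q' => ∫ ω, (Z ω q')^8 ∂μ).bddAbove q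
  have hA0 : ∀ q, 0 ≤ A q := fun q => integral_nonneg fun ω => by positivity
  have hAM : ∀ q, (A q)^2 ≤ M := fun q =>
    le_trans (sq_integral_pow4_le ((measurable_pi_apply q).comp hZm) (hZ8 q)) (hBle q)
  have hM0 : 0 ≤ M := le_trans (sq_nonneg _) (hAM i)
  have heq8 : ∀ (r : Fin N) (q : Fin n), ∫ ω, (z r ω q)^8 ∂μ = ∫ ω, (Z ω q)^8 ∂μ :=
    fun r q => moment_transfer μ Z (z r) hZm (hzm r) (hzmap r) q 8
  have heq4 : ∀ (r : Fin N) (q : Fin n), ∫ ω, (z r ω q)^4 ∂μ = A q :=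
    fun r q => moment_transfer μ Z (z r) hZm (hzm r) (hzmap r) q 4
  set Y : (Fin N × Fin N × Fin N × Fin N) → Ω → ℝ :=
    fun p ω => z p.1 ω i * z p.2.1 ω j * z p.2.2.1 ω k * z p.2.2.2 ω l with hY
  set C : (Fin N × Fin N × Fin N × Fin N) → ℝ :=
    fun p => kphi N p.1 p.2.1 p.2.2.1 p.2.2.2 with hC
  have hkWC : ∀ p, kW p = |C p| := fun p => rfl
  have hYm : ∀ p, Measurable (Y p) := fun p =>
    (((hx p.1 i).mul (hx p.2.1 j)).mul (hx p.2.2.1 k)).mul (hx p.2.2.2 l)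
  have hYY : ∀ p q, Integrable (fun ω => Y p ω * Y q ω) μ := by
    intro p q
    have hg : Integrable (fun ω => ((z p.1 ω i)^8 + (z p.2.1 ω j)^8 + (z p.2.2.1 ω k)^8
        + (z p.2.2.2 ω l)^8 + (z q.1 ω i)^8 + (z q.2.1 ω j)^8 + (z q.2.2.1 ω k)^8
        + (z q.2.2.2 ω l)^8) / 8) μ :=
      Integrable.div_const ((((((((hint8 p.1 i).add (hint8 p.2.1 j)).add
        (hint8 p.2.2.1 k)).add (hint8 p.2.2.2 l)).add (hint8 q.1 i)).add
        (hint8 q.2.1 j)).add (hint8 q.2.2.1 k)).add (hint8 q.2.2.2 l)) 8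
    refine hg.mono' ((hYm p).mul (hYm q)).aestronglyMeasurable
      (Filter.Eventually.of_forall fun ω => ?_)
    have h8 := abs8le (z p.1 ω i) (z p.2.1 ω j) (z p.2.2.1 ω k) (z p.2.2.2 ω l)
      (z q.1 ω i) (z q.2.1 ω j) (z q.2.2.1 ω k) (z q.2.2.2 ω l)
    calc ‖Y p ω * Y q ω‖ = |(z p.1 ω i * z p.2.1 ω j * z p.2.2.1 ω k * z p.2.2.2 ω l)
          * (z q.1 ω i * z q.2.1 ω j * z q.2.2.1 ω k * z q.2.2.2 ω l)| := by
          rw [Real.norm_eq_abs, hY]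
      _ ≤ _ := by
          refine le_trans h8 ?_
          apply le_of_eq
          ring
  have hY2 : ∀ p, MemLp (Y p) 2 μ := by
    intro p
    refine (memLp_two_iff_integrable_sq (hYm p).aestronglyMeasurable).mpr ?_
    refine (hYY p p).congr (Filter.Eventually.of_forall fun ω => ?_)
    ring
  have hY1 : ∀ p, Integrable (Y p) μ := fun p => (hY2 p).integrable one_le_two
  have hEY : ∀ p, |∫ ω, Y p ω ∂μ| ≤ (A i + A j + A k + A l)/4 := by
    intro p
    have I1 := hint4 p.1 i
    have I2 := hint4 p.2.1 j
    have I3 := hint4 p.2.2.1 k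
    have I4 := hint4 p.2.2.2 l
    have hg : Integrable (fun ω => ((z p.1 ω i)^4 + (z p.2.1 ω j)^4 + (z p.2.2.1 ω k)^4
        + (z p.2.2.2 ω l)^4)/4) μ := (((I1.add I2).add I3).add I4).div_const 4
    have hb : ‖∫ ω, Y p ω ∂μ‖ ≤ ∫ ω, ((z p.1 ω i)^4 + (z p.2.1 ω j)^4 + (z p.2.2.1 ω k)^4
        + (z p.2.2.2 ω l)^4)/4 ∂μ := by
      refine norm_integral_le_of_norm_le hg (Filter.Eventually.of_forall fun ω => ?_)
      have h4 := abs4le (z p.1 ω i) (z p.2.1 ω j) (z p.2.2.1 ω k) (z p.2.2.2 ω l)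
      calc ‖Y p ω‖ = |z p.1 ω i * z p.2.1 ω j * z p.2.2.1 ω k * z p.2.2.2 ω l| := by
            rw [Real.norm_eq_abs, hY]
        _ ≤ _ := le_trans h4 (le_of_eq (by ring))
    calc |∫ ω, Y p ω ∂μ| = ‖∫ ω, Y p ω ∂μ‖ := (Real.norm_eq_abs _).symm
      _ ≤ ∫ ω, ((z p.1 ω i)^4 + (z p.2.1 ω j)^4 + (z p.2.2.1 ω k)^4
          + (z p.2.2.2 ω l)^4)/4 ∂μ := hb
      _ = (A i + A j + A k + A l)/4 := by
          have I12 : Integrable (fun ω => (z p.1 ω i)^4 + (z p.2.1 ω j)^4) μ := I1.add I2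
          have I123 : Integrable (fun ω => (z p.1 ω i)^4 + (z p.2.1 ω j)^4
              + (z p.2.2.1 ω k)^4) μ := I12.add I3
          rw [integral_div, integral_add I123 I4, integral_add I12 I3, integral_add I1 I2,
            heq4 p.1 i, heq4 p.2.1 j, heq4 p.2.2.1 k, heq4 p.2.2.2 l]
  have hEYY : ∀ p q, |∫ ω, Y p ω * Y q ω ∂μ| ≤ M := by
    intro p q
    have I1 := hint8 p.1 i
    have I2 := hint8 p.2.1 j
    have I3 := hint8 p.2.2.1 k
    have I4 := hint8 p.2.2.2 l
    have I5 := hint8 q.1 i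
    have I6 := hint8 q.2.1 j
    have I7 := hint8 q.2.2.1 k
    have I8 := hint8 q.2.2.2 l
    have hg : Integrable (fun ω => ((z p.1 ω i)^8 + (z p.2.1 ω j)^8 + (z p.2.2.1 ω k)^8
        + (z p.2.2.2 ω l)^8 + (z q.1 ω i)^8 + (z q.2.1 ω j)^8 + (z q.2.2.1 ω k)^8
        + (z q.2.2.2 ω l)^8) / 8) μ :=
      Integrable.div_const (((((((I1.add I2).add I3).add I4).add I5).add I6).add I7).add I8) 8
    have hb : ‖∫ ω, Y p ω * Y q ω ∂μ‖ ≤ ∫ ω, ((z p.1 ω i)^8 + (z p.2.1 ω j)^8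
        + (z p.2.2.1 ω k)^8 + (z p.2.2.2 ω l)^8 + (z q.1 ω i)^8 + (z q.2.1 ω j)^8
        + (z q.2.2.1 ω k)^8 + (z q.2.2.2 ω l)^8) / 8 ∂μ := by
      refine norm_integral_le_of_norm_le hg (Filter.Eventually.of_forall fun ω => ?_)
      have h8 := abs8le (z p.1 ω i) (z p.2.1 ω j) (z p.2.2.1 ω k) (z p.2.2.2 ω l)
        (z q.1 ω i) (z q.2.1 ω j) (z q.2.2.1 ω k) (z q.2.2.2 ω l)
      calc ‖Y p ω * Y q ω‖ = |(z p.1 ω i * z p.2.1 ω j * z p.2.2.1 ω k * z p.2.2.2 ω l)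
            * (z q.1 ω i * z q.2.1 ω j * z q.2.2.1 ω k * z q.2.2.2 ω l)| := by
            rw [Real.norm_eq_abs, hY]
        _ ≤ _ := le_trans h8 (le_of_eq (by ring))
    have hint : ∫ ω, ((z p.1 ω i)^8 + (z p.2.1 ω j)^8 + (z p.2.2.1 ω k)^8
        + (z p.2.2.2 ω l)^8 + (z q.1 ω i)^8 + (z q.2.1 ω j)^8 + (z q.2.2.1 ω k)^8
        + (z q.2.2.2 ω l)^8) / 8 ∂μ ≤ M := by
      have I12 : Integrable (fun ω => (z p.1 ω i)^8 + (z p.2.1 ω j)^8) μ := I1.add I2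
      have I13 : Integrable (fun ω => (z p.1 ω i)^8 + (z p.2.1 ω j)^8
          + (z p.2.2.1 ω k)^8) μ := I12.add I3
      have I14 : Integrable (fun ω => (z p.1 ω i)^8 + (z p.2.1 ω j)^8
          + (z p.2.2.1 ω k)^8 + (z p.2.2.2 ω l)^8) μ := I13.add I4
      have I15 : Integrable (fun ω => (z p.1 ω i)^8 + (z p.2.1 ω j)^8
          + (z p.2.2.1 ω k)^8 + (z p.2.2.2 ω l)^8 + (z q.1 ω i)^8) μ := I14.add I5
      have I16 : Integrable (fun ω => (z p.1 ω i)^8 + (z p.2.1 ω j)^8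
          + (z p.2.2.1 ω k)^8 + (z p.2.2.2 ω l)^8 + (z q.1 ω i)^8
          + (z q.2.1 ω j)^8) μ := I15.add I6
      have I17 : Integrable (fun ω => (z p.1 ω i)^8 + (z p.2.1 ω j)^8
          + (z p.2.2.1 ω k)^8 + (z p.2.2.2 ω l)^8 + (z q.1 ω i)^8
          + (z q.2.1 ω j)^8 + (z q.2.2.1 ω k)^8) μ := I16.add I7
      rw [integral_div, integral_add I17 I8, integral_add I16 I7, integral_add I15 I6,
        integral_add I14 I5, integral_add I13 I4, integral_add I12 I3, integral_add I1 I2,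
        heq8 p.1 i, heq8 p.2.1 j, heq8 p.2.2.1 k, heq8 p.2.2.2 l,
        heq8 q.1 i, heq8 q.2.1 j, heq8 q.2.2.1 k, heq8 q.2.2.2 l]
      have b1 := hBle i
      have b2 := hBle j
      have b3 := hBle k
      have b4 := hBle l
      linarith
    calc |∫ ω, Y p ω * Y q ω ∂μ| = ‖∫ ω, Y p ω * Y q ω ∂μ‖ := (Real.norm_eq_abs _).symm
      _ ≤ _ := hb
      _ ≤ M := hint
  have hEYmul : ∀ p q, |(∫ ω, Y p ω ∂μ) * (∫ ω, Y q ω ∂μ)| ≤ M := by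
    intro p q
    have h1 := hEY p
    have h2 := hEY q
    have ha1 := hA0 i
    have ha2 := hA0 j
    have ha3 := hA0 k
    have ha4 := hA0 l
    have hsq : ((A i + A j + A k + A l)/4)^2 ≤ M := by
      nlinarith [hAM i, hAM j, hAM k, hAM l, sq_nonneg (A i - A j), sq_nonneg (A i - A k),
        sq_nonneg (A i - A l), sq_nonneg (A j - A k), sq_nonneg (A j - A l),
        sq_nonneg (A k - A l)]
    rw [abs_mul]
    nlinarith [abs_nonneg (∫ ω, Y p ω ∂μ), abs_nonneg (∫ ω, Y q ω ∂μ)]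
  have hfact : ∀ p q : Fin N × Fin N × Fin N × Fin N, Disjoint (kS p) (kS q) →
      ∫ ω, Y p ω * Y q ω ∂μ = (∫ ω, Y p ω ∂μ) * (∫ ω, Y q ω ∂μ) := by
    intro p q hd
    have hfin := hind.indepFun_finset (kS p) (kS q) hd hzm
    have hp1 : p.1 ∈ kS p := by simp [kS]
    have hp2 : p.2.1 ∈ kS p := by simp [kS]
    have hp3 : p.2.2.1 ∈ kS p := by simp [kS]
    have hp4 : p.2.2.2 ∈ kS p := by simp [kS]
    have hq1 : q.1 ∈ kS q := by simp [kS]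
    have hq2 : q.2.1 ∈ kS q := by simp [kS]
    have hq3 : q.2.2.1 ∈ kS q := by simp [kS]
    have hq4 : q.2.2.2 ∈ kS q := by simp [kS]
    have hg1m : Measurable (fun v : (↥(kS p) → Fin n → ℝ) =>
        v ⟨p.1, hp1⟩ i * v ⟨p.2.1, hp2⟩ j * v ⟨p.2.2.1, hp3⟩ k * v ⟨p.2.2.2, hp4⟩ l) := by
      fun_prop
    have hg2m : Measurable (fun v : (↥(kS q) → Fin n → ℝ) =>
        v ⟨q.1, hq1⟩ i * v ⟨q.2.1, hq2⟩ j * v ⟨q.2.2.1, hq3⟩ k * v ⟨q.2.2.2, hq4⟩ l) := by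
      fun_prop
    have hind2 : IndepFun (Y p) (Y q) μ := hfin.comp hg1m hg2m
    have hres := hind2.integral_mul_eq_mul_integral (hY1 p).aestronglyMeasurable (hY1 q).aestronglyMeasurable
    calc ∫ ω, Y p ω * Y q ω ∂μ = ∫ ω, (Y p * Y q) ω ∂μ := rfl
      _ = (∫ ω, Y p ω ∂μ) * (∫ ω, Y q ω ∂μ) := hres
  have hterm : ∀ p q : Fin N × Fin N × Fin N × Fin N,
      (C p * C q) * ((∫ ω, Y p ω * Y q ω ∂μ) - (∫ ω, Y p ω ∂μ) * (∫ ω, Y q ω ∂μ))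
        ≤ kW p * kW q * (2 * M * kE p q) := by
    intro p q
    by_cases hd : Disjoint (kS p) (kS q)
    · have hE0 : kE p q = 0 := by simp only [kE]; rw [if_pos hd]
      rw [hfact p q hd, sub_self, mul_zero, hE0, mul_zero, mul_zero]
    · have hE1 : kE p q = 1 := by simp only [kE]; rw [if_neg hd]
      rw [hE1, mul_one]
      have habs : |(∫ ω, Y p ω * Y q ω ∂μ) - (∫ ω, Y p ω ∂μ) * (∫ ω, Y q ω ∂μ)| ≤ 2*M := by
        have h1 := hEYY p q
        have h2 := hEYmul p q
        have h3 := abs_sub (∫ ω, Y p ω * Y q ω ∂μ) ((∫ ω, Y p ω ∂μ) * (∫ ω, Y q ω ∂μ))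
        linarith
      calc (C p * C q) * ((∫ ω, Y p ω * Y q ω ∂μ) - (∫ ω, Y p ω ∂μ) * (∫ ω, Y q ω ∂μ))
          ≤ |(C p * C q) * ((∫ ω, Y p ω * Y q ω ∂μ) - (∫ ω, Y p ω ∂μ) * (∫ ω, Y q ω ∂μ))| :=
            le_abs_self _
        _ = kW p * kW q * |(∫ ω, Y p ω * Y q ω ∂μ) - (∫ ω, Y p ω ∂μ) * (∫ ω, Y q ω ∂μ)| := by
            rw [abs_mul, abs_mul, hkWC p, hkWC q]
        _ ≤ kW p * kW q * (2 * M) :=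
            mul_le_mul_of_nonneg_left habs (mul_nonneg (kW_nonneg p) (kW_nonneg q))
  have hrw : (fun ω => kstat (fun r => z r ω i) (fun r => z r ω j) (fun r => z r ω k)
      (fun r => z r ω l)) = fun ω => (1/(N:ℝ)) * ∑ p : Fin N × Fin N × Fin N × Fin N,
        C p * Y p ω := by
    funext ω
    simp only [kstat, hC, hY, Fintype.sum_prod_type]
    congr 1
    refine Finset.sum_congr rfl fun r _ => Finset.sum_congr rfl fun s _ =>
      Finset.sum_congr rfl fun t _ => Finset.sum_congr rfl fun u _ => by ring
  rw [hrw, variance_sum_expand μ (1/(N:ℝ)) C Y hY2 hYY]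
  have h2M : (0:ℝ) ≤ 2 * M := by linarith
  calc (1/(N:ℝ)) ^ 2 * ∑ p : Fin N × Fin N × Fin N × Fin N,
        ∑ q : Fin N × Fin N × Fin N × Fin N, (C p * C q) *
          ((∫ ω, Y p ω * Y q ω ∂μ) - (∫ ω, Y p ω ∂μ) * (∫ ω, Y q ω ∂μ))
      ≤ (1/(N:ℝ)) ^ 2 * ∑ p : Fin N × Fin N × Fin N × Fin N,
          ∑ q : Fin N × Fin N × Fin N × Fin N, kW p * kW q * (2 * M * kE p q) := by
        refine mul_le_mul_of_nonneg_left ?_ (by positivity)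
        exact Finset.sum_le_sum fun p _ => Finset.sum_le_sum fun q _ => hterm p q
    _ = (1/(N:ℝ)) ^ 2 * (2 * M) * ∑ p : Fin N × Fin N × Fin N × Fin N,
          ∑ q : Fin N × Fin N × Fin N × Fin N, kW p * kW q * kE p q := by
        rw [mul_assoc]
        congr 1
        rw [Finset.mul_sum]
        refine Finset.sum_congr rfl fun p _ => ?_
        rw [Finset.mul_sum]
        exact Finset.sum_congr rfl fun q _ => by ring
    _ ≤ (1/(N:ℝ)) ^ 2 * (2 * M) * (2359296 * N) := by
        refine mul_le_mul_of_nonneg_left (master_sum hN) ?_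
        positivity
    _ = 4718592 * M / N := by
        field_simp
        ring
end
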